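/- arXiv:1312.2730 — 9 statements merged into one kernel-verified Lean document; each statement's English description precedes it below -/
import Mathlib

section
/- Let T be a trigraph of the class 𝓕 and let F be a family of cuts of T such that every inclusion-wise maximal clique K and every inclusion-wise maximal stable set S of T with K ∩ S = ∅ are separated by some cut of F. Then T admits a CS-separator of size at most |F| + 2|V(T)| + 4|σ(T)|. -/
/-- A trigraph: a symmetric adjacency function with values in {-1, 0, 1}. -/
structure Trigraph (V : Type) where
  theta : V → V → ℤ
  symm : ∀ u v, theta u v = theta v u
  range : ∀ u v, theta u v = -1 ∨ theta u v = 0 ∨ theta u v = 1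

namespace Trigraph

variable {V : Type}

def StrongAdj (T : Trigraph V) (u v : V) : Prop := u ≠ v ∧ T.theta u v = 1

def StrongAntiAdj (T : Trigraph V) (u v : V) : Prop := u ≠ v ∧ T.theta u v = -1

/-- A switchable (semiadjacent) pair. -/
def Switchable (T : Trigraph V) (u v : V) : Prop := u ≠ v ∧ T.theta u v = 0

def Adj (T : Trigraph V) (u v : V) : Prop := u ≠ v ∧ 0 ≤ T.theta u v

def AntiAdj (T : Trigraph V) (u v : V) : Prop := u ≠ v ∧ T.theta u v ≤ 0

/-- The complement trigraph. -/
def compl (T : Trigraph V) : Trigraph V where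
  theta := fun u v => - T.theta u v
  symm := fun u v => by show -T.theta u v = -T.theta v u; rw [T.symm u v]
  range := fun u v => by
    show -T.theta u v = -1 ∨ -T.theta u v = 0 ∨ -T.theta u v = 1
    rcases T.range u v with h | h | h <;> simp [h]

/-- The full realization: all switchable pairs become edges. -/
def fullRealization (T : Trigraph V) : SimpleGraph V where
  Adj := T.Adj
  symm := by
    refine ⟨?_⟩
    intro u v h
    exact ⟨Ne.symm h.1, by rw [T.symm v u]; exact h.2⟩
  loopless := ⟨fun v h => h.1 rfl⟩

/-- `G` is a realization of `T`. -/
def IsRealization (T : Trigraph V) (G : SimpleGraph V) : Prop :=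
  (∀ u v, T.StrongAdj u v → G.Adj u v) ∧ (∀ u v, T.StrongAntiAdj u v → ¬ G.Adj u v)

/-- A graph contains an induced cycle of odd length at least 5. -/
def GraphHasOddHole (G : SimpleGraph V) : Prop :=
  ∃ n : ℕ, 2 ≤ n ∧ ∃ f : ZMod (2 * n + 1) → V, Function.Injective f ∧
    ∀ i j, G.Adj (f i) (f j) ↔ (j = i + 1 ∨ i = j + 1)

def GraphIsBerge (G : SimpleGraph V) : Prop := ¬ GraphHasOddHole G ∧ ¬ GraphHasOddHole Gᶜ

/-- A trigraph is Berge if every realization is a Berge graph. -/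
def Berge (T : Trigraph V) : Prop := ∀ G : SimpleGraph V, T.IsRealization G → GraphIsBerge G

/-- The graph on V whose edges are the switchable pairs of T. -/
def switchGraph (T : Trigraph V) : SimpleGraph V where
  Adj := T.Switchable
  symm := by
    refine ⟨?_⟩
    intro u v h
    exact ⟨Ne.symm h.1, by rw [T.symm v u]; exact h.2⟩
  loopless := ⟨fun v h => h.1 rfl⟩

/-- Membership in the class 𝓕 of Berge trigraphs with restricted switchable components. -/
def InF (T : Trigraph V) : Prop :=
  T.Berge ∧
  (∀ v : V, {e ∈ T.switchGraph.edgeSet | ∀ x ∈ e, T.switchGraph.Reachable v x}.ncard ≤ 2) ∧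
  (∀ v x y : V, x ≠ y → T.Switchable v x → T.Switchable v y →
    ((∀ u, u ≠ v → u ≠ x → u ≠ y → T.StrongAdj v u) ∧ T.StrongAdj x y) ∨
    ((∀ u, u ≠ v → u ≠ x → u ≠ y → T.StrongAntiAdj v u) ∧ T.StrongAntiAdj x y))

/-- A path of length `k` in a trigraph, given by its sequence of vertices. -/
def IsPath (T : Trigraph V) (k : ℕ) (f : Fin (k + 1) → V) : Prop :=
  Function.Injective f ∧ ∀ i j : Fin (k + 1),
    (j.val = i.val + 1 → T.Adj (f i) (f j)) ∧ (i.val + 1 < j.val → T.AntiAdj (f i) (f j))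

/-- `X` is connected: the full realization of `T[X]` is connected. -/
def ConnectedOn (T : Trigraph V) (X : Set V) : Prop :=
  (T.fullRealization.induce X).Connected

/-- `X` is anticonnected: the full realization of the complement of `T[X]` is connected. -/
def AnticonnectedOn (T : Trigraph V) (X : Set V) : Prop :=
  (T.compl.fullRealization.induce X).Connected

def IsSkewPartition (T : Trigraph V) (A B : Set V) : Prop :=
  A.Nonempty ∧ B.Nonempty ∧ Disjoint A B ∧ A ∪ B = Set.univ ∧
  ¬ T.ConnectedOn A ∧ ¬ T.AnticonnectedOn B

def IsBalancedSkewPartition (T : Trigraph V) (A B : Set V) : Prop :=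
  T.IsSkewPartition A B ∧
  (∀ (k : ℕ) (f : Fin (k + 1) → V), Odd k → 1 < k → T.IsPath k f →
    ¬ (f 0 ∈ B ∧ f (Fin.last k) ∈ B ∧ ∀ i, i ≠ 0 → i ≠ Fin.last k → f i ∈ A)) ∧
  (∀ (k : ℕ) (f : Fin (k + 1) → V), Odd k → 1 < k → T.compl.IsPath k f →
    ¬ (f 0 ∈ A ∧ f (Fin.last k) ∈ A ∧ ∀ i, i ≠ 0 → i ≠ Fin.last k → f i ∈ B))

def HasBalancedSkewPartition (T : Trigraph V) : Prop :=
  ∃ A B, T.IsBalancedSkewPartition A B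

def IsClique (T : Trigraph V) (K : Set V) : Prop := K.Pairwise T.Adj

def IsStable (T : Trigraph V) (S : Set V) : Prop := S.Pairwise T.AntiAdj

def IsCut (c : Set V × Set V) : Prop := Disjoint c.1 c.2 ∧ c.1 ∪ c.2 = Set.univ

def IsCSSeparator (T : Trigraph V) (F : Finset (Set V × Set V)) : Prop :=
  (∀ c ∈ F, IsCut c) ∧
  ∀ K S : Set V, T.IsClique K → T.IsStable S → Disjoint K S →
    ∃ c ∈ F, K ⊆ c.1 ∧ S ⊆ c.2

end Trigraph


namespace Trigraph

variable {V : Type} [Fintype V]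

lemma not_strongAdj_of_antiAdj {T : Trigraph V} {u v : V} (h : T.AntiAdj u v) :
    ¬ T.StrongAdj u v := fun hs => by have := h.2; rw [hs.2] at this; omega

lemma adj_cases {T : Trigraph V} {u v : V} (h : T.Adj u v) :
    T.StrongAdj u v ∨ T.Switchable u v := by
  rcases T.range u v with h1 | h1 | h1
  · exact absurd h.2 (by omega)
  · exact Or.inr ⟨h.1, h1⟩
  · exact Or.inl ⟨h.1, h1⟩

/-- Switchable neighborhood as a finset. -/
noncomputable def swN (T : Trigraph V) (v : V) : Finset V :=
  (Set.toFinite {x | T.Switchable v x}).toFinset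

lemma mem_swN {T : Trigraph V} {v x : V} : x ∈ T.swN v ↔ T.Switchable v x := by
  simp [swN, Set.Finite.mem_toFinset]

lemma swN_card {T : Trigraph V} {v : V} :
    (T.swN v).card = ({x | T.Switchable v x} : Set V).ncard :=
  (Set.ncard_eq_toFinset_card _ _).symm

/-- At most two switchable neighbours, given the component condition. -/
lemma swN_card_le_two (T : Trigraph V)
    (h2 : ∀ v : V, {e ∈ T.switchGraph.edgeSet | ∀ x ∈ e, T.switchGraph.Reachable v x}.ncard ≤ 2)
    (v : V) : (T.swN v).card ≤ 2 := by
  rw [swN_card]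
  refine le_trans (Set.ncard_le_ncard_of_injOn (fun x => s(v, x)) ?_ ?_ (Set.toFinite _)) (h2 v)
  · intro x hx
    refine ⟨T.switchGraph.mem_edgeSet.mpr hx, ?_⟩
    intro z hz
    rcases Sym2.mem_iff.mp hz with rfl | rfl
    · exact SimpleGraph.Reachable.refl _
    · exact SimpleGraph.Adj.reachable hx
  · intro x _ y _ h
    exact Sym2.congr_right.mp h

lemma exists_maximal_ext (P : Set V → Prop) (K : Set V) (hK : P K) :
    ∃ M, P M ∧ K ⊆ M ∧ ∀ M', P M' → M ⊆ M' → M' = M := by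
  obtain ⟨M, hM, hmax⟩ := Set.Finite.exists_maximalFor id {M | P M ∧ K ⊆ M}
    (Set.toFinite _) ⟨K, hK, subset_refl K⟩
  exact ⟨M, hM.1, hM.2, fun M' h1 h2 => Set.Subset.antisymm (hmax ⟨h1, hM.2.trans h2⟩ h2) h2⟩

/-- The cut at a vertex. -/
noncomputable def cutAt (T : Trigraph V) (b : Bool) (v : V) (Q : Finset V) : Set V × Set V :=
  (({u | T.StrongAdj v u} ∪ ↑Q ∪ (cond b ({v} : Set V) ∅)),
   ({u | T.StrongAdj v u} ∪ ↑Q ∪ (cond b ({v} : Set V) ∅))ᶜ)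

lemma cutAt_isCut (T : Trigraph V) (b : Bool) (v : V) (Q : Finset V) :
    IsCut (T.cutAt b v Q) :=
  ⟨disjoint_compl_right, Set.union_compl_self _⟩

open Classical in
/-- The family of admissible Q-sets at a vertex. -/
noncomputable def Qfam (T : Trigraph V) (v : V) : Finset (Finset V) :=
  if (T.swN v).card ≤ 1 then (T.swN v).powerset
  else if ∃ x ∈ T.swN v, ∃ y ∈ T.swN v, x ≠ y ∧ T.StrongAdj x y then
    (T.swN v).powerset.filter (fun Q => Q.Nonempty)
  else (T.swN v).powerset.filter (fun Q => Q ≠ T.swN v)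

lemma Qfam_card_le (T : Trigraph V) (v : V) (h : (T.swN v).card ≤ 2) :
    (T.Qfam v).card ≤ 1 + (T.swN v).card := by
  classical
  unfold Qfam
  split_ifs with h1 h2
  · rw [Finset.card_powerset]
    rcases Nat.le_one_iff_eq_zero_or_eq_one.mp h1 with h0 | h0 <;> rw [h0] <;> norm_num
  · have hss : (T.swN v).powerset.filter (fun Q => Q.Nonempty) ⊂ (T.swN v).powerset :=
      Finset.filter_ssubset.mpr ⟨∅, Finset.empty_mem_powerset _, by simp⟩
    have hlt := Finset.card_lt_card hss
    have hc2 : (T.swN v).card = 2 := by omega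
    rw [Finset.card_powerset, hc2] at hlt
    rw [hc2]
    omega
  · have hss : (T.swN v).powerset.filter (fun Q => Q ≠ T.swN v) ⊂ (T.swN v).powerset :=
      Finset.filter_ssubset.mpr ⟨T.swN v, Finset.mem_powerset_self _, by simp⟩
    have hlt := Finset.card_lt_card hss
    have hc2 : (T.swN v).card = 2 := by omega
    rw [Finset.card_powerset, hc2] at hlt
    rw [hc2]
    omega

/-- Key separation property of `cutAt`. -/
lemma cutAt_sep (T : Trigraph V) (b : Bool) (v : V) (Q : Finset V) (K S : Set V)
    (hQN : ∀ x ∈ Q, T.Switchable v x)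
    (hKQ : ∀ u ∈ K, T.Switchable v u → u ∈ Q)
    (hQS : ∀ x ∈ Q, x ∉ S)
    (hKadj : ∀ u ∈ K, u ≠ v → T.Adj v u)
    (hSanti : ∀ u ∈ S, u ≠ v → T.AntiAdj v u)
    (hb : cond b (v ∉ S) (v ∉ K)) :
    K ⊆ (T.cutAt b v Q).1 ∧ S ⊆ (T.cutAt b v Q).2 := by
  constructor
  · intro u hu
    by_cases huv : u = v
    · subst huv
      cases b with
      | false => exact absurd hu hb
      | true => exact Or.inr rfl
    · rcases adj_cases (hKadj u hu huv) with hs | hw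
      · exact Or.inl (Or.inl hs)
      · exact Or.inl (Or.inr (hKQ u hu hw))
  · intro u hu hmem
    by_cases huv : u = v
    · subst huv
      rcases hmem with (hs | hq) | hv
      · exact hs.1 rfl
      · exact (hQN u hq).1 rfl
      · cases b with
        | false => exact hv
        | true => exact hb hu
    · rcases hmem with (hs | hq) | hv
      · exact not_strongAdj_of_antiAdj (hSanti u hu huv) hs
      · exact hQS u hq hu
      · cases b with
        | false => exact hv
        | true => exact huv hv

/-- Existence of a suitable `Q ∈ Qfam v`. -/
lemma exists_Q (T : Trigraph V) (hF : T.InF) (v : V) (K S : Set V)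
    (hK : T.IsClique K) (hS : T.IsStable S) (hd : Disjoint K S) :
    ∃ Q ∈ T.Qfam v, (∀ x ∈ Q, T.Switchable v x) ∧
      (∀ u ∈ K, T.Switchable v u → u ∈ Q) ∧ (∀ x ∈ Q, x ∉ S) := by
  classical
  have hcard : (T.swN v).card ≤ 2 := T.swN_card_le_two hF.2.1 v
  unfold Qfam
  split_ifs with h1 h2
  · refine ⟨(T.swN v).filter (fun x => x ∈ K), Finset.mem_powerset.mpr (Finset.filter_subset _ _),
      ?_, ?_, ?_⟩
    · intro x hx; exact mem_swN.mp (Finset.mem_of_mem_filter x hx)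
    · intro u hu hw; exact Finset.mem_filter.mpr ⟨mem_swN.mpr hw, hu⟩
    · intro x hx hxS
      exact Set.disjoint_left.mp hd (Finset.mem_filter.mp hx).2 hxS
  · obtain ⟨x, hx, y, hy, hxy, hsa⟩ := h2
    refine ⟨(T.swN v).filter (fun z => z ∉ S), Finset.mem_filter.mpr
      ⟨Finset.mem_powerset.mpr (Finset.filter_subset _ _), ?_⟩, ?_, ?_, ?_⟩
    · by_cases hxS : x ∈ S
      · refine ⟨y, Finset.mem_filter.mpr ⟨hy, fun hyS => ?_⟩⟩
        exact not_strongAdj_of_antiAdj (hS hxS hyS hxy) hsa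
      · exact ⟨x, Finset.mem_filter.mpr ⟨hx, hxS⟩⟩
    · intro z hz; exact mem_swN.mp (Finset.mem_of_mem_filter z hz)
    · intro u hu hw
      exact Finset.mem_filter.mpr ⟨mem_swN.mpr hw, fun huS => Set.disjoint_left.mp hd hu huS⟩
    · intro z hz; exact (Finset.mem_filter.mp hz).2
  · refine ⟨(T.swN v).filter (fun z => z ∈ K), Finset.mem_filter.mpr
      ⟨Finset.mem_powerset.mpr (Finset.filter_subset _ _), ?_⟩, ?_, ?_, ?_⟩
    · intro heq
      have hc2 : (T.swN v).card = 2 := by omega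
      obtain ⟨x, y, hxy, hNxy⟩ := Finset.card_eq_two.mp hc2
      have hx : x ∈ T.swN v := by rw [hNxy]; simp
      have hy : y ∈ T.swN v := by rw [hNxy]; simp
      have hxK : x ∈ K := by
        have : x ∈ (T.swN v).filter (fun z => z ∈ K) := by rw [heq]; exact hx
        exact (Finset.mem_filter.mp this).2
      have hyK : y ∈ K := by
        have : y ∈ (T.swN v).filter (fun z => z ∈ K) := by rw [heq]; exact hy
        exact (Finset.mem_filter.mp this).2
      rcases hF.2.2 v x y hxy (mem_swN.mp hx) (mem_swN.mp hy) with ⟨_, hsa⟩ | ⟨_, hsaa⟩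
      · exact h2 ⟨x, hx, y, hy, hxy, hsa⟩
      · have hth := (hK hxK hyK hxy).2
        rw [hsaa.2] at hth; omega
    · intro z hz; exact mem_swN.mp (Finset.mem_of_mem_filter z hz)
    · intro u hu hw; exact Finset.mem_filter.mpr ⟨mem_swN.mpr hw, hu⟩
    · intro z hz hzS
      exact Set.disjoint_left.mp hd (Finset.mem_filter.mp hz).2 hzS

lemma handshake (T : Trigraph V) :
    ∑ v : V, (T.swN v).card = 2 * T.switchGraph.edgeSet.ncard := by
  classical
  have h := SimpleGraph.sum_degrees_eq_twice_card_edges T.switchGraph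
  have h1 : ∀ v : V, (T.swN v).card = T.switchGraph.degree v := by
    intro v
    rw [swN_card]
    have e : {x | T.Switchable v x} = T.switchGraph.neighborSet v := rfl
    rw [e, ← Nat.card_coe_set_eq, Nat.card_eq_fintype_card,
      SimpleGraph.card_neighborSet_eq_degree]
  have h2 : T.switchGraph.edgeSet.ncard = T.switchGraph.edgeFinset.card := by
    rw [← Nat.card_coe_set_eq, Nat.card_eq_fintype_card, SimpleGraph.edgeFinset_card]
  rw [h2, ← h]
  exact Finset.sum_congr rfl (fun v _ => h1 v)

end Trigraph

/-- If a family F of cuts of a trigraph of 𝓕 separates all disjoint pairs of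
an inclusion-wise maximal clique and an inclusion-wise maximal stable set, then the
trigraph admits a CS-separator of size at most |F| + 2|V(T)| + 4|σ(T)|. -/
theorem stmt_5 {V : Type} [Fintype V] (T : Trigraph V) (hF : T.InF)
    (F : Finset (Set V × Set V)) (hcuts : ∀ c ∈ F, Trigraph.IsCut c)
    (hsep : ∀ K S : Set V,
      T.IsClique K → (∀ K', T.IsClique K' → K ⊆ K' → K' = K) →
      T.IsStable S → (∀ S', T.IsStable S' → S ⊆ S' → S' = S) →
      Disjoint K S → ∃ c ∈ F, K ⊆ c.1 ∧ S ⊆ c.2) :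
    ∃ F' : Finset (Set V × Set V), T.IsCSSeparator F' ∧
      F'.card ≤ F.card + 2 * Fintype.card V + 4 * T.switchGraph.edgeSet.ncard := by
  classical
  set Phi : Finset (Set V × Set V) :=
    Finset.univ.biUnion (fun v => (T.Qfam v).biUnion
      (fun Q => {T.cutAt false v Q, T.cutAt true v Q})) with hPhi
  refine ⟨F ∪ Phi, ⟨?_, ?_⟩, ?_⟩
  · intro c hc
    rcases Finset.mem_union.mp hc with hc | hc
    · exact hcuts c hc
    · simp only [hPhi, Finset.mem_biUnion, Finset.mem_insert, Finset.mem_singleton] at hc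
      obtain ⟨v, -, Q, -, hc | hc⟩ := hc <;> rw [hc] <;> exact T.cutAt_isCut _ _ _
  · intro K S hK hS hd
    obtain ⟨K', hK', hKK', hKmax⟩ := Trigraph.exists_maximal_ext T.IsClique K hK
    obtain ⟨S', hS', hSS', hSmax⟩ := Trigraph.exists_maximal_ext T.IsStable S hS
    by_cases hdis : Disjoint K' S'
    · obtain ⟨c, hc, h1, h2⟩ := hsep K' S' hK' hKmax hS' hSmax hdis
      exact ⟨c, Finset.mem_union_left _ hc, hKK'.trans h1, hSS'.trans h2⟩
    · obtain ⟨v, hvK', hvS'⟩ := Set.not_disjoint_iff.mp hdis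
      obtain ⟨Q, hQmem, hQN, hKQ, hQS⟩ := T.exists_Q hF v K S hK hS hd
      have hKadj : ∀ u ∈ K, u ≠ v → T.Adj v u := fun u hu hne =>
        hK' hvK' (hKK' hu) (fun h => hne h.symm)
      have hSanti : ∀ u ∈ S, u ≠ v → T.AntiAdj v u := fun u hu hne =>
        hS' hvS' (hSS' hu) (fun h => hne h.symm)
      by_cases hvK : v ∈ K
      · have hvS : v ∉ S := Set.disjoint_left.mp hd hvK
        obtain ⟨h1, h2⟩ := T.cutAt_sep true v Q K S hQN hKQ hQS hKadj hSanti hvS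
        refine ⟨T.cutAt true v Q, Finset.mem_union_right _ ?_, h1, h2⟩
        simp only [hPhi, Finset.mem_biUnion]
        exact ⟨v, Finset.mem_univ v, Q, hQmem, by simp⟩
      · obtain ⟨h1, h2⟩ := T.cutAt_sep false v Q K S hQN hKQ hQS hKadj hSanti hvK
        refine ⟨T.cutAt false v Q, Finset.mem_union_right _ ?_, h1, h2⟩
        simp only [hPhi, Finset.mem_biUnion]
        exact ⟨v, Finset.mem_univ v, Q, hQmem, by simp⟩
  · have hPhicard : Phi.card ≤ 2 * Fintype.card V + 4 * T.switchGraph.edgeSet.ncard := by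
      calc Phi.card
          ≤ ∑ v : V, ((T.Qfam v).biUnion
              (fun Q => {T.cutAt false v Q, T.cutAt true v Q})).card :=
            Finset.card_biUnion_le
        _ ≤ ∑ v : V, ∑ Q ∈ T.Qfam v,
              ({T.cutAt false v Q, T.cutAt true v Q} : Finset (Set V × Set V)).card :=
            Finset.sum_le_sum (fun v _ => Finset.card_biUnion_le)
        _ ≤ ∑ v : V, ∑ _Q ∈ T.Qfam v, 2 := by
            refine Finset.sum_le_sum fun v _ => Finset.sum_le_sum fun Q _ => ?_
            exact (Finset.card_insert_le _ _).trans (by simp)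
        _ = ∑ v : V, 2 * (T.Qfam v).card := by
            simp [Finset.sum_const, mul_comm]
        _ ≤ ∑ v : V, (2 + 2 * (T.swN v).card) := by
            refine Finset.sum_le_sum fun v _ => ?_
            have := T.Qfam_card_le v (T.swN_card_le_two hF.2.1 v)
            omega
        _ = 2 * Fintype.card V + 2 * ∑ v : V, (T.swN v).card := by
            rw [Finset.sum_add_distrib, Finset.sum_const, Finset.card_univ, ← Finset.mul_sum]
            ring
        _ = 2 * Fintype.card V + 4 * T.switchGraph.edgeSet.ncard := by
            rw [T.handshake]; ring
    calc (F ∪ Phi).card ≤ F.card + Phi.card := Finset.card_union_le _ _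
      _ ≤ _ := by omega
end

section
/- Let G be a finite simple graph with at most M inclusion-wise maximal cliques. Then G admits a CS-separator of size at most M + 2|V(G)|. -/
variable {V : Type}

/-- A clique of a graph: a set of pairwise adjacent vertices. -/
def GIsClique (G : SimpleGraph V) (K : Set V) : Prop := K.Pairwise G.Adj

/-- A stable set of a graph: a set of pairwise non-adjacent vertices. -/
def GIsStable (G : SimpleGraph V) (S : Set V) : Prop := S.Pairwise fun u v => ¬ G.Adj u v

/-- A cut: an ordered pair of disjoint vertex sets covering all vertices. -/
def GIsCut (c : Set V × Set V) : Prop := Disjoint c.1 c.2 ∧ c.1 ∪ c.2 = Set.univ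

/-- A CS-separator: a family of cuts separating every clique from every disjoint stable set. -/
def GIsCSSeparator (G : SimpleGraph V) (F : Finset (Set V × Set V)) : Prop :=
  (∀ c ∈ F, GIsCut c) ∧
  ∀ K S : Set V, GIsClique G K → GIsStable G S → Disjoint K S →
    ∃ c ∈ F, K ⊆ c.1 ∧ S ⊆ c.2

/-- `G` contains an induced cycle of odd length at least 5. -/
def GHasOddHole (G : SimpleGraph V) : Prop :=
  ∃ n : ℕ, 2 ≤ n ∧ ∃ f : ZMod (2 * n + 1) → V, Function.Injective f ∧
    ∀ i j, G.Adj (f i) (f j) ↔ (j = i + 1 ∨ i = j + 1)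

/-- A graph is Berge if neither it nor its complement has an odd hole. -/
def GIsBerge (G : SimpleGraph V) : Prop := ¬ GHasOddHole G ∧ ¬ GHasOddHole Gᶜ

/-- An induced path of length `k` in `G`, given by its sequence of vertices. -/
def GIsInducedPath (G : SimpleGraph V) (k : ℕ) (f : Fin (k + 1) → V) : Prop :=
  Function.Injective f ∧
  ∀ i j : Fin (k + 1), G.Adj (f i) (f j) ↔ (j.val = i.val + 1 ∨ i.val = j.val + 1)

/-- A skew-partition of a graph. -/
def GIsSkewPartition (G : SimpleGraph V) (A B : Set V) : Prop :=
  A.Nonempty ∧ B.Nonempty ∧ Disjoint A B ∧ A ∪ B = Set.univ ∧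
  ¬ (G.induce A).Connected ∧ ¬ ((G.induce B)ᶜ).Connected

/-- A balanced skew-partition of a graph. -/
def GIsBalancedSkewPartition (G : SimpleGraph V) (A B : Set V) : Prop :=
  GIsSkewPartition G A B ∧
  (∀ (k : ℕ) (f : Fin (k + 1) → V), Odd k → 1 < k → GIsInducedPath G k f →
    ¬ (f 0 ∈ B ∧ f (Fin.last k) ∈ B ∧ ∀ i, i ≠ 0 → i ≠ Fin.last k → f i ∈ A)) ∧
  (∀ (k : ℕ) (f : Fin (k + 1) → V), Odd k → 1 < k → GIsInducedPath Gᶜ k f →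
    ¬ (f 0 ∈ A ∧ f (Fin.last k) ∈ A ∧ ∀ i, i ≠ 0 → i ≠ Fin.last k → f i ∈ B))

def GHasBalancedSkewPartition (G : SimpleGraph V) : Prop :=
  ∃ A B, GIsBalancedSkewPartition G A B

/-- `C` is a connected component of the subgraph of `G` induced on `X`. -/
def GIsComponentOf (G : SimpleGraph V) (X C : Set V) : Prop :=
  C ⊆ X ∧ C.Nonempty ∧ (G.induce C).Connected ∧
  ∀ D : Set V, C ⊆ D → D ⊆ X → (G.induce D).Connected → D = C

/-- A finite simple graph with at most M inclusion-wise maximal cliques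
admits a CS-separator of size at most M + 2|V(G)|. -/
theorem stmt_7 {V : Type} [Fintype V] (G : SimpleGraph V) (M : ℕ)
    (hM : {K : Set V | GIsClique G K ∧ ∀ K', GIsClique G K' → K ⊆ K' → K' = K}.ncard ≤ M) :
    ∃ F : Finset (Set V × Set V), GIsCSSeparator G F ∧
      F.card ≤ M + 2 * Fintype.card V := by
  classical
  set MC : Set (Set V) :=
    {K : Set V | GIsClique G K ∧ ∀ K', GIsClique G K' → K ⊆ K' → K' = K} with hMCdef
  have hfin : MC.Finite := Set.toFinite MC
  set F1 : Finset (Set V × Set V) := hfin.toFinset.image (fun K => (K, Kᶜ)) with hF1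
  set F2 : Finset (Set V × Set V) :=
    Finset.univ.image (fun v : V => ({u | G.Adj v u}, {u | G.Adj v u}ᶜ)) with hF2
  refine ⟨F1 ∪ F2, ⟨?_, ?_⟩, ?_⟩
  · intro c hc
    rw [Finset.mem_union] at hc
    rcases hc with hc | hc <;>
    · simp only [hF1, hF2, Finset.mem_image, Set.Finite.mem_toFinset] at hc
      obtain ⟨x, -, rfl⟩ := hc
      exact ⟨disjoint_compl_right, Set.union_compl_self _⟩
  · intro K S hK hS hKS
    obtain ⟨K', hK'mem, hK'max⟩ := Set.Finite.exists_maximalFor id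
      {K' | GIsClique G K' ∧ K ⊆ K'} (Set.toFinite _) ⟨K, hK, subset_rfl⟩
    obtain ⟨hK'cl, hKK'⟩ := hK'mem
    have hK'MC : K' ∈ MC :=
      ⟨hK'cl, fun K'' hK'' hsub => Set.Subset.antisymm (hK'max ⟨hK'', hKK'.trans hsub⟩ hsub) hsub⟩
    by_cases hdisj : Disjoint K' S
    · refine ⟨(K', K'ᶜ), Finset.mem_union_left _
        (Finset.mem_image_of_mem _ (hfin.mem_toFinset.mpr hK'MC)), hKK', ?_⟩
      intro s hs hs'
      exact (hdisj.ne_of_mem hs' hs) rfl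
    · rw [Set.not_disjoint_iff] at hdisj
      obtain ⟨v, hvK', hvS⟩ := hdisj
      refine ⟨({u | G.Adj v u}, {u | G.Adj v u}ᶜ), Finset.mem_union_right _
        (Finset.mem_image_of_mem _ (Finset.mem_univ v)), ?_, ?_⟩
      · intro k hk
        have hkK' : k ∈ K' := hKK' hk
        have hkv : k ≠ v := fun h => (hKS.ne_of_mem hk hvS) h
        exact (hK'cl hvK' hkK' (Ne.symm hkv))
      · intro s hs
        simp only [Set.mem_compl_iff, Set.mem_setOf_eq]
        by_cases hsv : s = v
        · subst hsv; exact fun h => (G.loopless.irrefl s) h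
        · exact hS hvS hs (fun h => hsv h.symm)
  · calc (F1 ∪ F2).card ≤ F1.card + F2.card := Finset.card_union_le _ _
      _ ≤ M + 2 * Fintype.card V := by
          have h1 : F1.card ≤ M := by
            refine le_trans (Finset.card_image_le) ?_
            rw [← Set.ncard_eq_toFinset_card MC hfin]
            exact hM
          have h2 : F2.card ≤ Fintype.card V := by
            refine le_trans (Finset.card_image_le) ?_
            simp
          omega
end

section
/- Let G be a finite simple graph admitting a good partition. Then G admits a CS-separator of size at most 3(|V(G)| + 1)². -/
variable {V : Type}

/-- A good partition of a graph. -/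
def GIsGoodPartition (G : SimpleGraph V) (X Y : Set V) : Prop :=
  Disjoint X Y ∧ X ∪ Y = Set.univ ∧
  (∀ C, GIsComponentOf G X C → C.ncard ≤ 2) ∧
  (∀ C, GIsComponentOf Gᶜ Y C → C.ncard ≤ 2) ∧
  (∀ CX CY, GIsComponentOf G X CX → GIsComponentOf Gᶜ Y CY → ∀ v ∈ CX ∪ CY,
    {p : V × V | p.1 ∈ CX ∧ p.2 ∈ CY ∧ (p.1 = v ∨ p.2 = v) ∧ G.Adj p.1 p.2}.ncard ≤ 1 ∧
    {p : V × V | p.1 ∈ CX ∧ p.2 ∈ CY ∧ (p.1 = v ∨ p.2 = v) ∧ p.1 ≠ p.2 ∧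
      ¬ G.Adj p.1 p.2}.ncard ≤ 1)

lemma gsingleton_connected (G : SimpleGraph V) (x : V) : (G.induce {x}).Connected := by
  have : Nonempty ({x} : Set V) := ⟨⟨x, rfl⟩⟩
  constructor
  intro u v
  have : u = v := Subtype.ext (u.2.trans v.2.symm)
  exact this ▸ SimpleGraph.Reachable.refl u

lemma gexists_component [Finite V] (G : SimpleGraph V) {X : Set V} {x : V} (hx : x ∈ X) :
    ∃ C, GIsComponentOf G X C ∧ x ∈ C := by
  have hS : ({D : Set V | x ∈ D ∧ D ⊆ X ∧ (G.induce D).Connected}).Finite := Set.toFinite _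
  have hne : ({D : Set V | x ∈ D ∧ D ⊆ X ∧ (G.induce D).Connected}).Nonempty :=
    ⟨{x}, rfl, by simpa using hx, gsingleton_connected G x⟩
  obtain ⟨C, hC, hmax⟩ := Set.Finite.exists_maximalFor id _ hS hne
  obtain ⟨hxC, hCX, hconn⟩ := hC
  refine ⟨C, ⟨hCX, ⟨x, hxC⟩, hconn, ?_⟩, hxC⟩
  intro D hCD hDX hDconn
  exact Set.Subset.antisymm (hmax ⟨hCD hxC, hDX, hDconn⟩ hCD) hCD

lemma gmem_of_adj_component {G : SimpleGraph V} {X C : Set V} (hC : GIsComponentOf G X C)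
    {x y : V} (hx : x ∈ C) (hy : y ∈ X) (hadj : G.Adj x y) : y ∈ C := by
  have hpair : (G.induce {x, y}).Connected := SimpleGraph.induce_pair_connected_of_adj hadj
  have hu : (G.induce (C ∪ {x, y})).Connected :=
    SimpleGraph.induce_union_connected hC.2.2.1.preconnected hpair.preconnected ⟨x, hx, by simp⟩
  have heq := hC.2.2.2 (C ∪ {x, y}) Set.subset_union_left
    (Set.union_subset hC.1 (by
      intro z hz
      rcases hz with h | h
      · exact hC.1 (h ▸ hx)
      · exact (Set.mem_singleton_iff.mp h) ▸ hy)) hu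
  have hmem : y ∈ C ∪ {x, y} := Or.inr (by simp)
  rwa [heq] at hmem

lemma gcomponent_unique {G : SimpleGraph V} {X C D : Set V} (hC : GIsComponentOf G X C)
    (hD : GIsComponentOf G X D) (h : (C ∩ D).Nonempty) : C = D := by
  have hu : (G.induce (C ∪ D)).Connected :=
    SimpleGraph.induce_union_connected hC.2.2.1.preconnected hD.2.2.1.preconnected h
  have h1 := hC.2.2.2 (C ∪ D) Set.subset_union_left (Set.union_subset hC.1 hD.1) hu
  have h2 := hD.2.2.2 (C ∪ D) Set.subset_union_right (Set.union_subset hC.1 hD.1) hu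
  exact h1.symm.trans h2

lemma gadj_of_pair_connected (G : SimpleGraph V) {a b : V} (hne : a ≠ b)
    (h : (G.induce ({a, b} : Set V)).Connected) : G.Adj a b := by
  have ha : a ∈ ({a, b} : Set V) := by simp
  have hb : b ∈ ({a, b} : Set V) := by simp
  obtain ⟨w⟩ := h.preconnected ⟨a, ha⟩ ⟨b, hb⟩
  cases w with
  | nil => exact absurd rfl hne
  | cons hadj p =>
    rename_i c
    have hGadj : G.Adj a c.1 := hadj
    rcases c.2 with h1 | h1
    · exact absurd (h1 ▸ hGadj) (G.irrefl)
    · rw [Set.mem_singleton_iff] at h1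
      exact h1 ▸ hGadj

lemma gadj_in_small_component [Finite V] {G : SimpleGraph V} {X C : Set V}
    (hC : GIsComponentOf G X C) (hcard : C.ncard ≤ 2) {a b : V}
    (ha : a ∈ C) (hb : b ∈ C) (hne : a ≠ b) : G.Adj a b := by
  have hsub : ({a, b} : Set V) ⊆ C := by
    intro z hz; rcases hz with h | h
    · exact h ▸ ha
    · exact (Set.mem_singleton_iff.mp h) ▸ hb
  have heq : ({a, b} : Set V) = C :=
    Set.eq_of_subset_of_ncard_le hsub (by rw [Set.ncard_pair hne]; exact hcard) (Set.toFinite C)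
  exact gadj_of_pair_connected G hne (heq ▸ hC.2.2.1)

lemma gpair_eq_of_small_component [Finite V] {C : Set V}
    (hcard : C.ncard ≤ 2) {a b : V} (ha : a ∈ C) (hb : b ∈ C) (hne : a ≠ b) :
    C = {a, b} := by
  have hsub : ({a, b} : Set V) ⊆ C := by
    intro z hz; rcases hz with h | h
    · exact h ▸ ha
    · exact (Set.mem_singleton_iff.mp h) ▸ hb
  exact (Set.eq_of_subset_of_ncard_le hsub (by rw [Set.ncard_pair hne]; exact hcard)
    (Set.toFinite C)).symm


/-- A finite simple graph admitting a good partition admits a CS-separator of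
size at most 3(|V(G)| + 1)². -/
theorem stmt_8 {V : Type} [Fintype V] (G : SimpleGraph V)
    (h : ∃ X Y : Set V, GIsGoodPartition G X Y) :
    ∃ F : Finset (Set V × Set V), GIsCSSeparator G F ∧
      F.card ≤ 3 * (Fintype.card V + 1) ^ 2 := by
  classical
  obtain ⟨X, Y, hdisj, hcover, hX2, hY2, hmatch⟩ := h
  obtain ⟨comp, hcomp⟩ : ∃ f : V → Set V, ∀ v ∈ X, GIsComponentOf G X (f v) ∧ v ∈ f v :=
    ⟨fun v => if hv : v ∈ X then (gexists_component G hv).choose else ∅,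
     fun v hv => by simp only [dif_pos hv]; exact (gexists_component G hv).choose_spec⟩
  obtain ⟨acomp, hacomp⟩ : ∃ f : V → Set V, ∀ v ∈ Y, GIsComponentOf Gᶜ Y (f v) ∧ v ∈ f v :=
    ⟨fun v => if hv : v ∈ Y then (gexists_component Gᶜ hv).choose else ∅,
     fun v hv => by simp only [dif_pos hv]; exact (gexists_component Gᶜ hv).choose_spec⟩
  set U : Fin 3 × Option V × Option V → Set V := fun i =>
    (i.2.1.elim ∅ fun x => if i.1 = 2 then comp x else {x}) ∪
      i.2.2.elim Y fun y => (Y \ acomp y) ∪ if i.1 = 1 then {y} else ∅ with hU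
  have hUeq : ∀ (k : Fin 3) (ox oy : Option V), U (k, ox, oy) =
      (ox.elim ∅ fun x => if k = 2 then comp x else {x}) ∪
        oy.elim Y fun y => (Y \ acomp y) ∪ if k = 1 then {y} else ∅ := by
    intro k ox oy; rw [hU]
  have hmemXY : ∀ v : V, v ∈ X ∨ v ∈ Y := by
    intro v
    have : v ∈ X ∪ Y := hcover ▸ Set.mem_univ v
    exact this
  have hXYne : ∀ {a b : V}, a ∈ X → b ∈ Y → a ≠ b := by
    intro a b ha hb he
    exact Set.disjoint_left.mp hdisj ha (he ▸ hb)
  refine ⟨Finset.image (fun i => (U i, (U i)ᶜ)) Finset.univ, ⟨?_, ?_⟩, ?_⟩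
  · intro c hc
    obtain ⟨i, -, rfl⟩ := Finset.mem_image.mp hc
    exact ⟨disjoint_compl_right, Set.union_compl_self _⟩
  · intro K S hK hS hKS
    have hKSne : ∀ {a : V}, a ∈ K → a ∉ S := fun ha => Set.disjoint_left.mp hKS ha
    by_cases hSY : (S ∩ Y).Nonempty
    · obtain ⟨ys, hysS, hysY⟩ := hSY
      have hCy := (hacomp ys hysY).1
      have hysCy := (hacomp ys hysY).2
      have hSYsub : ∀ z, z ∈ S → z ∈ Y → z ∈ acomp ys := by
        intro z hzS hzY
        by_cases hz : z = ys
        · exact hz ▸ hysCy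
        · exact gmem_of_adj_component hCy hysCy hzY
            ((SimpleGraph.compl_adj _ _ _).mpr ⟨Ne.symm hz, hS hysS hzS (Ne.symm hz)⟩)
      by_cases hKCy : (K ∩ acomp ys).Nonempty
      · obtain ⟨y0, hy0K, hy0Cy⟩ := hKCy
        have hy0Y : y0 ∈ Y := hCy.1 hy0Cy
        have hacy0 : acomp y0 = acomp ys :=
          gcomponent_unique (hacomp y0 hy0Y).1 hCy ⟨y0, (hacomp y0 hy0Y).2, hy0Cy⟩
        have hKCysub : ∀ z, z ∈ K → z ∈ acomp ys → z = y0 := by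
          intro z hzK hzCy
          by_contra hzne
          exact ((SimpleGraph.compl_adj _ _ _).mp
            (gadj_in_small_component hCy (hY2 _ hCy) hzCy hy0Cy hzne)).2 (hK hzK hy0K hzne)
        by_cases hKX : (K ∩ X).Nonempty
        · obtain ⟨x0, hx0K, hx0X⟩ := hKX
          have hCx := (hcomp x0 hx0X).1
          have hx0Cx := (hcomp x0 hx0X).2
          have hKXsub : ∀ z, z ∈ K → z ∈ X → z ∈ comp x0 := by
            intro z hzK hzX
            by_cases hz : z = x0
            · exact hz ▸ hx0Cx
            · exact gmem_of_adj_component hCx hx0Cx hzX (hK hx0K hzK (Ne.symm hz))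
          by_cases hKX1 : ∃ x1 ∈ K ∩ X, x1 ≠ x0
          · exfalso
            obtain ⟨x1, ⟨hx1K, hx1X⟩, hx1ne⟩ := hKX1
            have hx1Cx := hKXsub x1 hx1K hx1X
            have hle := (hmatch (comp x0) (acomp ys) hCx hCy y0 (Or.inr hy0Cy)).1
            have hsub : ({(x0, y0), (x1, y0)} : Set (V × V)) ⊆
                {p : V × V | p.1 ∈ comp x0 ∧ p.2 ∈ acomp ys ∧ (p.1 = y0 ∨ p.2 = y0) ∧
                  G.Adj p.1 p.2} := by
              intro p hp
              rcases hp with hp | hp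
              · subst hp
                exact ⟨hx0Cx, hy0Cy, Or.inr rfl, hK hx0K hy0K (hXYne hx0X hy0Y)⟩
              · rw [Set.mem_singleton_iff] at hp
                subst hp
                exact ⟨hx1Cx, hy0Cy, Or.inr rfl, hK hx1K hy0K (hXYne hx1X hy0Y)⟩
            have hpne : ((x0, y0) : V × V) ≠ (x1, y0) := by
              intro he
              exact hx1ne (congrArg Prod.fst he).symm
            have h2 : 2 ≤ ({p : V × V | p.1 ∈ comp x0 ∧ p.2 ∈ acomp ys ∧
                (p.1 = y0 ∨ p.2 = y0) ∧ G.Adj p.1 p.2}).ncard := by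
              rw [← Set.ncard_pair hpne]
              exact Set.ncard_le_ncard hsub (Set.toFinite _)
            omega
          · push_neg at hKX1
            refine ⟨(U (1, some x0, some y0), (U (1, some x0, some y0))ᶜ),
              Finset.mem_image_of_mem _ (Finset.mem_univ _), ?_, ?_⟩
            · show K ⊆ U (1, some x0, some y0)
              rw [hUeq]
              simp only [Option.elim_some]
              simp only [Fin.reduceEq, reduceIte, if_false, if_true]; rw [hacy0]
              intro u hu
              rcases hmemXY u with hX' | hY'
              · exact Or.inl (Set.mem_singleton_iff.mpr (hKX1 u ⟨hu, hX'⟩))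
              · by_cases hu' : u ∈ acomp ys
                · exact Or.inr (Or.inr (Set.mem_singleton_iff.mpr (hKCysub u hu hu')))
                · exact Or.inr (Or.inl ⟨hY', hu'⟩)
            · show S ⊆ (U (1, some x0, some y0))ᶜ
              rw [hUeq]
              simp only [Option.elim_some]
              simp only [Fin.reduceEq, reduceIte, if_false, if_true]; rw [hacy0]
              intro s hs hsU
              rcases hsU with h' | h' | h'
              · exact hKSne hx0K ((Set.mem_singleton_iff.mp h') ▸ hs)
              · exact h'.2 (hSYsub s hs h'.1)
              · exact hKSne hy0K ((Set.mem_singleton_iff.mp h') ▸ hs)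
        · refine ⟨(U (1, none, some y0), (U (1, none, some y0))ᶜ),
            Finset.mem_image_of_mem _ (Finset.mem_univ _), ?_, ?_⟩
          · show K ⊆ U (1, none, some y0)
            rw [hUeq]
            simp only [Option.elim_some, Option.elim_none]
            simp only [Fin.reduceEq, reduceIte, if_false, if_true]; rw [hacy0]
            intro u hu
            rcases hmemXY u with hX' | hY'
            · exact absurd ⟨u, hu, hX'⟩ hKX
            · by_cases hu' : u ∈ acomp ys
              · exact Or.inr (Or.inr (Set.mem_singleton_iff.mpr (hKCysub u hu hu')))
              · exact Or.inr (Or.inl ⟨hY', hu'⟩)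
          · show S ⊆ (U (1, none, some y0))ᶜ
            rw [hUeq]
            simp only [Option.elim_some, Option.elim_none]
            simp only [Fin.reduceEq, reduceIte, if_false, if_true]; rw [hacy0]
            intro s hs hsU
            rcases hsU with h' | h' | h'
            · exact h'
            · exact h'.2 (hSYsub s hs h'.1)
            · exact hKSne hy0K ((Set.mem_singleton_iff.mp h') ▸ hs)
      · have hKCy' : ∀ z, z ∈ K → z ∉ acomp ys := fun z h1 h2 => hKCy ⟨z, h1, h2⟩
        by_cases hKX : (K ∩ X).Nonempty
        · obtain ⟨x0, hx0K, hx0X⟩ := hKX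
          have hCx := (hcomp x0 hx0X).1
          have hx0Cx := (hcomp x0 hx0X).2
          have hKXsub : ∀ z, z ∈ K → z ∈ X → z ∈ comp x0 := by
            intro z hzK hzX
            by_cases hz : z = x0
            · exact hz ▸ hx0Cx
            · exact gmem_of_adj_component hCx hx0Cx hzX (hK hx0K hzK (Ne.symm hz))
          by_cases hKX1 : ∃ x1 ∈ K ∩ X, x1 ≠ x0
          · obtain ⟨x1, ⟨hx1K, hx1X⟩, hx1ne⟩ := hKX1
            have hCxK : comp x0 ⊆ K := by
              rw [gpair_eq_of_small_component (hX2 _ hCx) hx0Cx (hKXsub x1 hx1K hx1X)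
                (Ne.symm hx1ne)]
              intro z hz
              rcases hz with h' | h'
              · exact h' ▸ hx0K
              · exact (Set.mem_singleton_iff.mp h') ▸ hx1K
            refine ⟨(U (2, some x0, some ys), (U (2, some x0, some ys))ᶜ),
              Finset.mem_image_of_mem _ (Finset.mem_univ _), ?_, ?_⟩
            · show K ⊆ U (2, some x0, some ys)
              rw [hUeq]
              simp only [Option.elim_some]
              simp only [Fin.reduceEq, reduceIte, if_false, if_true]
              intro u hu
              rcases hmemXY u with hX' | hY'
              · exact Or.inl (hKXsub u hu hX')
              · exact Or.inr (Or.inl ⟨hY', hKCy' u hu⟩)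
            · show S ⊆ (U (2, some x0, some ys))ᶜ
              rw [hUeq]
              simp only [Option.elim_some]
              simp only [Fin.reduceEq, reduceIte, if_false, if_true]
              intro s hs hsU
              rcases hsU with h' | h' | h'
              · exact hKSne (hCxK h') hs
              · exact h'.2 (hSYsub s hs h'.1)
              · exact h'
          · push_neg at hKX1
            refine ⟨(U (0, some x0, some ys), (U (0, some x0, some ys))ᶜ),
              Finset.mem_image_of_mem _ (Finset.mem_univ _), ?_, ?_⟩
            · show K ⊆ U (0, some x0, some ys)
              rw [hUeq]
              simp only [Option.elim_some]
              simp only [Fin.reduceEq, reduceIte, if_false, if_true]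
              intro u hu
              rcases hmemXY u with hX' | hY'
              · exact Or.inl (Set.mem_singleton_iff.mpr (hKX1 u ⟨hu, hX'⟩))
              · exact Or.inr (Or.inl ⟨hY', hKCy' u hu⟩)
            · show S ⊆ (U (0, some x0, some ys))ᶜ
              rw [hUeq]
              simp only [Option.elim_some]
              simp only [Fin.reduceEq, reduceIte, if_false, if_true]
              intro s hs hsU
              rcases hsU with h' | h' | h'
              · exact hKSne hx0K ((Set.mem_singleton_iff.mp h') ▸ hs)
              · exact h'.2 (hSYsub s hs h'.1)
              · exact h'
        · refine ⟨(U (0, none, some ys), (U (0, none, some ys))ᶜ),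
            Finset.mem_image_of_mem _ (Finset.mem_univ _), ?_, ?_⟩
          · show K ⊆ U (0, none, some ys)
            rw [hUeq]
            simp only [Option.elim_some, Option.elim_none]
            simp only [Fin.reduceEq, reduceIte, if_false, if_true]
            intro u hu
            rcases hmemXY u with hX' | hY'
            · exact absurd ⟨u, hu, hX'⟩ hKX
            · exact Or.inr (Or.inl ⟨hY', hKCy' u hu⟩)
          · show S ⊆ (U (0, none, some ys))ᶜ
            rw [hUeq]
            simp only [Option.elim_some, Option.elim_none]
            simp only [Fin.reduceEq, reduceIte, if_false, if_true]
            intro s hs hsU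
            rcases hsU with h' | h' | h'
            · exact h'
            · exact h'.2 (hSYsub s hs h'.1)
            · exact h'
    · have hSY' : ∀ z, z ∈ S → z ∉ Y := fun z h1 h2 => hSY ⟨z, h1, h2⟩
      by_cases hKX : (K ∩ X).Nonempty
      · obtain ⟨x0, hx0K, hx0X⟩ := hKX
        have hCx := (hcomp x0 hx0X).1
        have hx0Cx := (hcomp x0 hx0X).2
        have hKXsub : ∀ z, z ∈ K → z ∈ X → z ∈ comp x0 := by
          intro z hzK hzX
          by_cases hz : z = x0
          · exact hz ▸ hx0Cx
          · exact gmem_of_adj_component hCx hx0Cx hzX (hK hx0K hzK (Ne.symm hz))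
        by_cases hKX1 : ∃ x1 ∈ K ∩ X, x1 ≠ x0
        · obtain ⟨x1, ⟨hx1K, hx1X⟩, hx1ne⟩ := hKX1
          have hCxK : comp x0 ⊆ K := by
            rw [gpair_eq_of_small_component (hX2 _ hCx) hx0Cx (hKXsub x1 hx1K hx1X)
              (Ne.symm hx1ne)]
            intro z hz
            rcases hz with h' | h'
            · exact h' ▸ hx0K
            · exact (Set.mem_singleton_iff.mp h') ▸ hx1K
          refine ⟨(U (2, some x0, none), (U (2, some x0, none))ᶜ),
            Finset.mem_image_of_mem _ (Finset.mem_univ _), ?_, ?_⟩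
          · show K ⊆ U (2, some x0, none)
            rw [hUeq]
            simp only [Option.elim_some, Option.elim_none]
            simp only [Fin.reduceEq, reduceIte, if_false, if_true]
            intro u hu
            rcases hmemXY u with hX' | hY'
            · exact Or.inl (hKXsub u hu hX')
            · exact Or.inr hY'
          · show S ⊆ (U (2, some x0, none))ᶜ
            rw [hUeq]
            simp only [Option.elim_some, Option.elim_none]
            simp only [Fin.reduceEq, reduceIte, if_false, if_true]
            intro s hs hsU
            rcases hsU with h' | h'
            · exact hKSne (hCxK h') hs
            · exact hSY' s hs h'
        · push_neg at hKX1
          refine ⟨(U (0, some x0, none), (U (0, some x0, none))ᶜ),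
            Finset.mem_image_of_mem _ (Finset.mem_univ _), ?_, ?_⟩
          · show K ⊆ U (0, some x0, none)
            rw [hUeq]
            simp only [Option.elim_some, Option.elim_none]
            simp only [Fin.reduceEq, reduceIte, if_false, if_true]
            intro u hu
            rcases hmemXY u with hX' | hY'
            · exact Or.inl (Set.mem_singleton_iff.mpr (hKX1 u ⟨hu, hX'⟩))
            · exact Or.inr hY'
          · show S ⊆ (U (0, some x0, none))ᶜ
            rw [hUeq]
            simp only [Option.elim_some, Option.elim_none]
            simp only [Fin.reduceEq, reduceIte, if_false, if_true]
            intro s hs hsU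
            rcases hsU with h' | h'
            · exact hKSne hx0K ((Set.mem_singleton_iff.mp h') ▸ hs)
            · exact hSY' s hs h'
      · refine ⟨(U (0, none, none), (U (0, none, none))ᶜ),
          Finset.mem_image_of_mem _ (Finset.mem_univ _), ?_, ?_⟩
        · show K ⊆ U (0, none, none)
          rw [hUeq]
          simp only [Option.elim_none]
          intro u hu
          rcases hmemXY u with hX' | hY'
          · exact absurd ⟨u, hu, hX'⟩ hKX
          · exact Or.inr hY'
        · show S ⊆ (U (0, none, none))ᶜ
          rw [hUeq]
          simp only [Option.elim_none]
          intro s hs hsU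
          rcases hsU with h' | h'
          · exact h'
          · exact hSY' s hs h'
  · calc (Finset.image (fun i => (U i, (U i)ᶜ)) Finset.univ).card
        ≤ (Finset.univ : Finset (Fin 3 × Option V × Option V)).card := Finset.card_image_le
      _ = 3 * ((Fintype.card V + 1) * (Fintype.card V + 1)) := by
          simp [Fintype.card_prod, Fintype.card_option]
      _ = 3 * (Fintype.card V + 1) ^ 2 := by ring
end

section
/- Let 𝒞 be a class of finite simple graphs, k ≥ 1 and m ≥ 1. If every graph of 𝒞 admits a CS-separator of size at most m, then every trigraph T of 𝒞^{≤k} admits a CS-separator of size at most m^{k²}. -/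
/-- A trigraph on a finite vertex set `verts` drawn from an ambient type `α`:
a symmetric adjacency function with values in {-1, 0, 1}. (Graphs are the trigraphs with
no value 0 between distinct vertices of `verts`.) -/
structure FTG (α : Type) where
  verts : Finset α
  theta : α → α → ℤ
  symm : ∀ u v, theta u v = theta v u
  range : ∀ u v, theta u v = -1 ∨ theta u v = 0 ∨ theta u v = 1

namespace FTG

variable {α : Type} [DecidableEq α]

def StrongAdj (T : FTG α) (u v : α) : Prop :=
  u ∈ T.verts ∧ v ∈ T.verts ∧ u ≠ v ∧ T.theta u v = 1

def StrongAntiAdj (T : FTG α) (u v : α) : Prop :=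
  u ∈ T.verts ∧ v ∈ T.verts ∧ u ≠ v ∧ T.theta u v = -1

def Switchable (T : FTG α) (u v : α) : Prop :=
  u ∈ T.verts ∧ v ∈ T.verts ∧ u ≠ v ∧ T.theta u v = 0

def Adj (T : FTG α) (u v : α) : Prop :=
  u ∈ T.verts ∧ v ∈ T.verts ∧ u ≠ v ∧ 0 ≤ T.theta u v

def AntiAdj (T : FTG α) (u v : α) : Prop :=
  u ∈ T.verts ∧ v ∈ T.verts ∧ u ≠ v ∧ T.theta u v ≤ 0

/-- `T` is a (simple) graph: no switchable pair. -/
def IsGraph (T : FTG α) : Prop :=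
  ∀ u v, u ∈ T.verts → v ∈ T.verts → u ≠ v → T.theta u v ≠ 0

/-- `G` is a realization of `T`: a graph on the same vertex set keeping all strong edges
and strong antiedges. -/
def IsRealization (T G : FTG α) : Prop :=
  G.verts = T.verts ∧ G.IsGraph ∧
  ∀ u v, u ∈ T.verts → v ∈ T.verts → u ≠ v →
    (T.theta u v = 1 → G.theta u v = 1) ∧ (T.theta u v = -1 → G.theta u v = -1)

def IsClique (T : FTG α) (K : Set α) : Prop := K ⊆ ↑T.verts ∧ K.Pairwise T.Adj

def IsStable (T : FTG α) (S : Set α) : Prop := S ⊆ ↑T.verts ∧ S.Pairwise T.AntiAdj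

def IsCut (T : FTG α) (c : Set α × Set α) : Prop :=
  Disjoint c.1 c.2 ∧ c.1 ∪ c.2 = ↑T.verts

def IsCSSeparator (T : FTG α) (F : Finset (Set α × Set α)) : Prop :=
  (∀ c ∈ F, T.IsCut c) ∧
  ∀ K S : Set α, T.IsClique K → T.IsStable S → Disjoint K S →
    ∃ c ∈ F, K ⊆ c.1 ∧ S ⊆ c.2

/-- Membership in the class `𝒞^{≤k}`: the vertex set has a partition into parts of size
at most `k`, all pairs inside a part are switchable, no switchable pair crosses two parts,
and some realization belongs to `𝒞`. -/
def InCk (C : Set (FTG α)) (k : ℕ) (T : FTG α) : Prop :=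
  (∃ P : Finset (Finset α),
    P.biUnion id = T.verts ∧
    (∀ p ∈ P, ∀ q ∈ P, p ≠ q → Disjoint p q) ∧
    (∀ p ∈ P, 1 ≤ p.card ∧ p.card ≤ k) ∧
    (∀ p ∈ P, ∀ u ∈ p, ∀ v ∈ p, u ≠ v → T.theta u v = 0) ∧
    (∀ u v, u ∈ T.verts → v ∈ T.verts → u ≠ v → T.theta u v = 0 →
      ∀ p ∈ P, (u ∈ p ↔ v ∈ p))) ∧
  ∃ G ∈ C, T.IsRealization G

/-- `T` is the generalized `k`-join of `T1` and `T2`. -/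
def IsGenJoin (k : ℕ) (T T1 T2 : FTG α) : Prop :=
  ∃ (r s : ℕ) (A : Fin r → Finset α) (B : Fin s → Finset α) (a : Fin r → α) (b : Fin s → α),
    1 ≤ r ∧ r ≤ k ∧ 1 ≤ s ∧ s ≤ k ∧
    (∀ j, (A j).Nonempty) ∧ (∀ i, (B i).Nonempty) ∧
    (∀ j j', j ≠ j' → Disjoint (A j) (A j')) ∧
    (∀ i i', i ≠ i' → Disjoint (B i) (B i')) ∧
    Function.Injective a ∧ Function.Injective b ∧
    (∀ i j, b i ∉ A j) ∧ (∀ j i, a j ∉ B i) ∧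
    Disjoint T1.verts T2.verts ∧
    T1.verts = Finset.univ.biUnion A ∪ Finset.univ.image b ∧
    T2.verts = Finset.univ.biUnion B ∪ Finset.univ.image a ∧
    (∀ i i', i ≠ i' → T1.theta (b i) (b i') = 0) ∧
    (∀ j j', j ≠ j' → T2.theta (a j) (a j') = 0) ∧
    (∀ i j, ((∀ u ∈ A j, T1.theta (b i) u = 1) ∧ (∀ u ∈ B i, T2.theta (a j) u = 1)) ∨
            ((∀ u ∈ A j, T1.theta (b i) u = -1) ∧ (∀ u ∈ B i, T2.theta (a j) u = -1))) ∧
    T.verts = Finset.univ.biUnion A ∪ Finset.univ.biUnion B ∧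
    (∀ u ∈ Finset.univ.biUnion A, ∀ v ∈ Finset.univ.biUnion A, T.theta u v = T1.theta u v) ∧
    (∀ u ∈ Finset.univ.biUnion B, ∀ v ∈ Finset.univ.biUnion B, T.theta u v = T2.theta u v) ∧
    (∀ j i, ∀ u ∈ A j, ∀ v ∈ B i,
      ((∀ x ∈ A j, T1.theta (b i) x = 1) → T.theta u v = 1) ∧
      ((∀ x ∈ A j, T1.theta (b i) x = -1) → T.theta u v = -1))

/-- The closure of `𝒞^{≤k}` under generalized `k`-joins. -/
inductive InClosure (C : Set (FTG α)) (k : ℕ) : FTG α → Prop where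
  | base (T : FTG α) (h : InCk C k T) : InClosure C k T
  | join (T T1 T2 : FTG α) (h1 : InClosure C k T1) (h2 : InClosure C k T2)
      (h : IsGenJoin k T T1 T2) : InClosure C k T

/-- `𝒞` is closed under induced subgraphs. -/
def ClosedUnderInduced (C : Set (FTG α)) : Prop :=
  ∀ G ∈ C, ∀ s : Finset α, s ⊆ G.verts → FTG.mk s G.theta G.symm G.range ∈ C

/-- `𝒞` is `c`-good: every member with at least 2 vertices, with any `c`-balanced weight
function, has a biclique or a complement biclique of weight at least `c` times the total
weight. -/
def IsGood (c : ℝ) (C : Set (FTG α)) : Prop :=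
  ∀ G ∈ C, 2 ≤ G.verts.card → ∀ w : α → ℕ,
    (∀ v ∈ G.verts, (w v : ℝ) ≤ c * ∑ x ∈ G.verts, (w x : ℝ)) →
    ∃ V1 V2 : Finset α, V1 ⊆ G.verts ∧ V2 ⊆ G.verts ∧ Disjoint V1 V2 ∧
      ((∀ u ∈ V1, ∀ v ∈ V2, G.StrongAdj u v) ∨ (∀ u ∈ V1, ∀ v ∈ V2, G.StrongAntiAdj u v)) ∧
      c * (∑ x ∈ G.verts, (w x : ℝ)) ≤ min (∑ x ∈ V1, (w x : ℝ)) (∑ x ∈ V2, (w x : ℝ))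

end FTG

/-- If every graph of a class 𝒞 admits a CS-separator of size at most m,
then every trigraph of 𝒞^{≤k} admits a CS-separator of size at most m^(k²). -/
theorem stmt_11 {α : Type} [DecidableEq α] (C : Set (FTG α))
    (hgraph : ∀ G ∈ C, FTG.IsGraph G) (k m : ℕ) (hk : 1 ≤ k) (hm : 1 ≤ m)
    (h : ∀ G ∈ C, ∃ F, FTG.IsCSSeparator G F ∧ F.card ≤ m) :
    ∀ T : FTG α, FTG.InCk C k T →
      ∃ F, FTG.IsCSSeparator T F ∧ F.card ≤ m ^ (k ^ 2) := by
  
  classical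
  intro T hT
  obtain ⟨⟨P, hPU, hPdisj, hPcard, hPswitch, hPcross⟩, G, hGC, hGv, hGgraph, hGtheta⟩ := hT
  obtain ⟨FG, hFG, hFGcard⟩ := h G hGC
  have hk0 : 0 < k := hk
  have hpart : ∀ v ∈ T.verts, ∃ p ∈ P, v ∈ p := by
    intro v hv
    rw [← hPU] at hv
    simpa using Finset.mem_biUnion.mp hv
  set pos : α → ℕ := fun v =>
    if hv : ∃ p ∈ P, v ∈ p then hv.choose.toList.idxOf v else 0 with hposdef
  have hpos_spec : ∀ p ∈ P, ∀ v ∈ p, pos v = p.toList.idxOf v := by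
    intro p hp v hv
    have hex : ∃ q ∈ P, v ∈ q := ⟨p, hp, hv⟩
    have h1 := hex.choose_spec
    have hqe : hex.choose = p := by
      by_contra hne
      exact (Finset.disjoint_left.mp (hPdisj _ h1.1 p hp hne) h1.2) hv
    simp only [hposdef, dif_pos hex, hqe]
  have hpos_lt : ∀ v ∈ T.verts, pos v < k := by
    intro v hv
    obtain ⟨p, hp, hvp⟩ := hpart v hv
    rw [hpos_spec p hp v hvp]
    have h1 : p.toList.idxOf v < p.toList.length :=
      List.idxOf_lt_length_iff.mpr (Finset.mem_toList.mpr hvp)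
    have h2 : p.toList.length = p.card := Finset.length_toList p
    have h3 := (hPcard p hp).2
    omega
  have hpos_inj : ∀ p ∈ P, ∀ u ∈ p, ∀ v ∈ p, pos u = pos v → u = v := by
    intro p hp u hu v hv he
    rw [hpos_spec p hp u hu, hpos_spec p hp v hv] at he
    have h2 : p.toList.idxOf u < p.toList.length :=
      List.idxOf_lt_length_iff.mpr (Finset.mem_toList.mpr hu)
    have h3 : p.toList.idxOf v < p.toList.length :=
      List.idxOf_lt_length_iff.mpr (Finset.mem_toList.mpr hv)
    rw [← List.getElem_idxOf h2, ← List.getElem_idxOf h3]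
    simp only [he]
  set posF : α → Fin k := fun v => ⟨pos v % k, Nat.mod_lt _ hk0⟩ with hposFdef
  have hposF : ∀ v ∈ T.verts, (posF v : ℕ) = pos v := by
    intro v hv
    simp only [hposFdef]
    exact Nat.mod_eq_of_lt (hpos_lt v hv)
  have hcross : ∀ u ∈ T.verts, ∀ v ∈ T.verts, u ≠ v → posF u = posF v →
      T.theta u v ≠ 0 := by
    intro u hu v hv hne hpe h0
    obtain ⟨p, hp, hup⟩ := hpart u hu
    have hvp : v ∈ p := (hPcross u v hu hv hne h0 p hp).mp hup
    apply hne
    apply hpos_inj p hp u hup v hvp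
    have := congrArg Fin.val hpe
    rwa [hposF u hu, hposF v hv] at this
  set cutOf : (Fin k → Fin k → {c // c ∈ FG}) → Set α × Set α := fun g =>
    ({v | v ∈ T.verts ∧ ∀ j, v ∈ (g (posF v) j).1.1},
     {v | v ∈ T.verts ∧ ¬ ∀ j, v ∈ (g (posF v) j).1.1}) with hcutdef
  refine ⟨Finset.image cutOf Finset.univ, ⟨?_, ?_⟩, ?_⟩
  · -- each element is a cut of T
    intro c hc
    obtain ⟨g, -, rfl⟩ := Finset.mem_image.mp hc
    constructor
    · rw [Set.disjoint_left]
      rintro v ⟨hv1, hv2⟩ ⟨hv3, hv4⟩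
      exact hv4 hv2
    · ext v
      simp only [hcutdef, Set.mem_union, Set.mem_setOf_eq, Finset.coe_sort_coe,
        Finset.mem_coe]
      by_cases hv : v ∈ T.verts
      · by_cases hall : ∀ j, v ∈ (g (posF v) j).1.1 <;> tauto
      · tauto
  · -- separation
    intro K S hK hS hKS
    have key : ∀ i j : Fin k, ∃ c ∈ FG,
        {v | v ∈ K ∧ posF v = i} ⊆ c.1 ∧ {v | v ∈ S ∧ posF v = j} ⊆ c.2 := by
      intro i j
      apply hFG.2
      · constructor
        · intro v hv
          rw [hGv]
          exact hK.1 hv.1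
        · intro u hu v hv hne
          have hAdj := hK.2 hu.1 hv.1 hne
          have huT : u ∈ T.verts := Finset.mem_coe.mp (hK.1 hu.1)
          have hvT : v ∈ T.verts := Finset.mem_coe.mp (hK.1 hv.1)
          have hne0 := hcross u huT v hvT hne (hu.2.trans hv.2.symm)
          have h1 : T.theta u v = 1 := by
            rcases T.range u v with h' | h' | h'
            · exfalso; have := hAdj.2.2.2; omega
            · exact absurd h' hne0
            · exact h'
          refine ⟨by rw [hGv]; exact huT, by rw [hGv]; exact hvT, hne, ?_⟩
          rw [(hGtheta u v huT hvT hne).1 h1]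
          norm_num
      · constructor
        · intro v hv
          rw [hGv]
          exact hS.1 hv.1
        · intro u hu v hv hne
          have hAdj := hS.2 hu.1 hv.1 hne
          have huT : u ∈ T.verts := Finset.mem_coe.mp (hS.1 hu.1)
          have hvT : v ∈ T.verts := Finset.mem_coe.mp (hS.1 hv.1)
          have hne0 := hcross u huT v hvT hne (hu.2.trans hv.2.symm)
          have h1 : T.theta u v = -1 := by
            rcases T.range u v with h' | h' | h'
            · exact h'
            · exact absurd h' hne0
            · exfalso; have := hAdj.2.2.2; omega
          refine ⟨by rw [hGv]; exact huT, by rw [hGv]; exact hvT, hne, ?_⟩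
          rw [(hGtheta u v huT hvT hne).2 h1]
          norm_num
      · rw [Set.disjoint_left]
        rintro v ⟨hv1, hv2⟩ ⟨hv3, hv4⟩
        exact Set.disjoint_left.mp hKS hv1 hv3
    choose c hc1 hc2 hc3 using key
    refine ⟨cutOf (fun i j => ⟨c i j, hc1 i j⟩),
      Finset.mem_image_of_mem _ (Finset.mem_univ _), ?_, ?_⟩
    · intro v hv
      refine ⟨Finset.mem_coe.mp (hK.1 hv), fun j => ?_⟩
      exact hc2 (posF v) j ⟨hv, rfl⟩
    · intro v hv
      refine ⟨Finset.mem_coe.mp (hS.1 hv), fun hall => ?_⟩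
      have h1 := hall (posF v)
      have h2 := hc3 (posF v) (posF v) ⟨hv, rfl⟩
      have hcut := hFG.1 _ (hc1 (posF v) (posF v))
      exact Set.disjoint_left.mp hcut.1 h1 h2
  · -- cardinality
    calc (Finset.image cutOf Finset.univ).card
        ≤ (Finset.univ : Finset (Fin k → Fin k → {c // c ∈ FG})).card :=
          Finset.card_image_le
      _ = Fintype.card (Fin k → Fin k → {c // c ∈ FG}) := Finset.card_univ
      _ = (FG.card ^ k) ^ k := by
          rw [Fintype.card_fun, Fintype.card_fun, Fintype.card_coe, Fintype.card_fin]
      _ ≤ (m ^ k) ^ k := by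
          exact Nat.pow_le_pow_left (Nat.pow_le_pow_left hFGcard k) k
      _ = m ^ (k ^ 2) := by rw [← pow_mul, sq]
end

section
/- Let G be a finite simple graph admitting a CS-separator of size at most m, where m ≥ 1, and let k ≥ 1. Then there exists a family of at most m^k cuts of G such that for every clique K and all stable sets S1, …, Sk of G with K ∩ (S1 ∪ … ∪ Sk) = ∅, some cut (U, W) of the family satisfies K ⊆ U and S1 ∪ … ∪ Sk ⊆ W. -/
variable {V : Type}

/-- From a CS-separator of size at most m one gets a family of at most m^k
cuts separating every clique from every union of at most k stable sets. -/
theorem stmt_12 {V : Type} [Fintype V] (G : SimpleGraph V) (m k : ℕ)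
    (hm : 1 ≤ m) (hk : 1 ≤ k)
    (h : ∃ F : Finset (Set V × Set V), GIsCSSeparator G F ∧ F.card ≤ m) :
    ∃ F' : Finset (Set V × Set V), F'.card ≤ m ^ k ∧ (∀ c ∈ F', GIsCut c) ∧
      ∀ (K : Set V) (S : Fin k → Set V), GIsClique G K → (∀ i, GIsStable G (S i)) →
        Disjoint K (⋃ i, S i) → ∃ c ∈ F', K ⊆ c.1 ∧ (⋃ i, S i) ⊆ c.2 := by
  classical
  obtain ⟨F, ⟨hcut, hsep⟩, hcard⟩ := h
  refine ⟨Finset.image (fun g : Fin k → {c // c ∈ F} =>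
      ((⋂ i, (g i).1.1), (⋃ i, (g i).1.2))) Finset.univ, ?_, ?_, ?_⟩
  · calc _ ≤ (Finset.univ : Finset (Fin k → {c // c ∈ F})).card := Finset.card_image_le
      _ = F.card ^ k := by
          simp [Finset.card_univ, Fintype.card_fun]
      _ ≤ m ^ k := Nat.pow_le_pow_left hcard k
  · intro c hc
    simp only [Finset.mem_image, Finset.mem_univ, true_and] at hc
    obtain ⟨g, rfl⟩ := hc
    constructor
    · rw [Set.disjoint_left]
      rintro x hx hx2
      simp only [Set.mem_iUnion] at hx2
      obtain ⟨i, hxi⟩ := hx2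
      exact Set.disjoint_left.mp (hcut _ (g i).2).1 (Set.mem_iInter.mp hx i) hxi
    · apply Set.eq_univ_of_forall
      intro x
      by_cases hx : ∀ i, x ∈ (g i).1.1
      · exact Or.inl (Set.mem_iInter.mpr hx)
      · push_neg at hx
        obtain ⟨i, hi⟩ := hx
        have := (hcut _ (g i).2).2
        have hx2 : x ∈ (g i).1.1 ∪ (g i).1.2 := this ▸ Set.mem_univ x
        refine Or.inr (Set.mem_iUnion.mpr ⟨i, hx2.resolve_left hi⟩)
  · intro K S hK hS hdisj
    have : ∀ i, ∃ c ∈ F, K ⊆ c.1 ∧ S i ⊆ c.2 := fun i =>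
      hsep K (S i) hK (hS i) (hdisj.mono_right (Set.subset_iUnion S i))
    choose c hcF hcK hcS using this
    refine ⟨_, Finset.mem_image.mpr ⟨fun i => ⟨c i, hcF i⟩, Finset.mem_univ _, rfl⟩, ?_, ?_⟩
    · exact Set.subset_iInter fun i => hcK i
    · exact Set.iUnion_subset fun i => (hcS i).trans (Set.subset_iUnion (fun j => (c j).2) i)
end

section
/- Let G be a finite simple graph admitting a CS-separator of size at most m, where m ≥ 1, and let k ≥ 1. Then there exists a family of at most m^{k²} cuts of G such that for all cliques K1, …, Kk and all stable sets S1, …, Sk of G with (K1 ∪ … ∪ Kk) ∩ (S1 ∪ … ∪ Sk) = ∅, some cut (U, W) of the family satisfies K1 ∪ … ∪ Kk ⊆ U and S1 ∪ … ∪ Sk ⊆ W. -/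
variable {V : Type}

/-- From a CS-separator of size at most m one gets a family of at most m^(k²)
cuts separating every union of at most k cliques from every union of at most k stable sets. -/
theorem stmt_13 {V : Type} [Fintype V] (G : SimpleGraph V) (m k : ℕ)
    (hm : 1 ≤ m) (hk : 1 ≤ k)
    (h : ∃ F : Finset (Set V × Set V), GIsCSSeparator G F ∧ F.card ≤ m) :
    ∃ F' : Finset (Set V × Set V), F'.card ≤ m ^ (k ^ 2) ∧ (∀ c ∈ F', GIsCut c) ∧
      ∀ (K : Fin k → Set V) (S : Fin k → Set V),
        (∀ i, GIsClique G (K i)) → (∀ i, GIsStable G (S i)) →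
        Disjoint (⋃ i, K i) (⋃ i, S i) →
        ∃ c ∈ F', (⋃ i, K i) ⊆ c.1 ∧ (⋃ i, S i) ⊆ c.2 := by
  classical
  obtain ⟨F, ⟨hFcut, hFsep⟩, hFcard⟩ := h
  set Φ : ((Fin k × Fin k) → Set V × Set V) → Set V × Set V :=
    fun g => (⋃ i, ⋂ j, (g (i, j)).1, (⋃ i, ⋂ j, (g (i, j)).1)ᶜ) with hΦ
  refine ⟨(Fintype.piFinset fun _ : Fin k × Fin k => F).image Φ, ?_, ?_, ?_⟩
  · calc ((Fintype.piFinset fun _ : Fin k × Fin k => F).image Φ).card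
        ≤ (Fintype.piFinset fun _ : Fin k × Fin k => F).card := Finset.card_image_le
      _ = F.card ^ (k * k) := by
          rw [Fintype.card_piFinset]
          simp [Finset.prod_const]
      _ ≤ m ^ (k ^ 2) := by
          rw [sq]; exact Nat.pow_le_pow_left hFcard _
  · intro c hc
    simp only [Finset.mem_image] at hc
    obtain ⟨g, -, rfl⟩ := hc
    exact ⟨disjoint_compl_right, Set.union_compl_self _⟩
  · intro K S hK hS hdisj
    have hpair : ∀ i j : Fin k, ∃ c ∈ F, K i ⊆ c.1 ∧ S j ⊆ c.2 := fun i j =>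
      hFsep (K i) (S j) (hK i) (hS j)
        (Set.disjoint_of_subset (Set.subset_iUnion K i) (Set.subset_iUnion S j) hdisj)
    choose g hgF hgK hgS using fun p : Fin k × Fin k => hpair p.1 p.2
    refine ⟨Φ g, Finset.mem_image_of_mem _ (by simpa [Fintype.mem_piFinset] using hgF), ?_, ?_⟩
    · apply Set.iUnion_subset; intro i
      exact (Set.subset_iInter fun j => hgK (i, j)).trans
        (Set.subset_iUnion (fun i => ⋂ j, (g (i, j)).1) i)
    · apply Set.iUnion_subset; intro j x hx
      simp only [hΦ, Set.mem_compl_iff, Set.mem_iUnion, Set.mem_iInter, not_exists]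
      intro i hi
      exact Set.disjoint_left.mp (hFcut _ (hgF (i, j))).1 (hi j) (hgS (i, j) hx)
end

section
/- Let k ≥ 1 and let T be the generalized k-join of trigraphs T1 and T2. If T1 admits a CS-separator of size m1 and T2 admits a CS-separator of size m2, then T admits a CS-separator of size at most m1 + m2. -/
open Set

/-- Lift a cut of one side of a generalized join to a cut of the join. -/
def liftCut {α : Type} (Tverts AU : Set α) {s : ℕ} (B : Fin s → Finset α) (b : Fin s → α)
    (c : Set α × Set α) : Set α × Set α :=
  ((c.1 ∩ AU) ∪ ⋃ i ∈ {i | b i ∈ c.1}, (↑(B i) : Set α),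
   Tverts \ ((c.1 ∩ AU) ∪ ⋃ i ∈ {i | b i ∈ c.1}, (↑(B i) : Set α)))

lemma liftCut_fst_subset {α : Type} (Tverts AU : Set α) {s : ℕ} (B : Fin s → Finset α)
    (b : Fin s → α) (c : Set α × Set α) (hAU : AU ⊆ Tverts)
    (hB : ∀ i, (↑(B i) : Set α) ⊆ Tverts) :
    (liftCut Tverts AU B b c).1 ⊆ Tverts :=
  union_subset (inter_subset_right.trans hAU) (iUnion₂_subset fun i _ => hB i)

lemma liftCut_isCut {α : Type} [DecidableEq α] (T : FTG α) (AU : Set α) {s : ℕ}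
    (B : Fin s → Finset α) (b : Fin s → α) (c : Set α × Set α)
    (hAU : AU ⊆ ↑T.verts) (hB : ∀ i, (↑(B i) : Set α) ⊆ ↑T.verts) :
    T.IsCut (liftCut ↑T.verts AU B b c) := by
  constructor
  · exact disjoint_sdiff_self_right
  · exact Set.union_diff_cancel (liftCut_fst_subset _ _ _ _ _ hAU hB)

/-- Key lemma: if no `B i` meets both `K` and `S`, then a cut of `T1` lifts to a cut
of `T` separating `K` and `S`. -/
lemma key_lemma {α : Type} [DecidableEq α] (T T1 : FTG α)
    {r s : ℕ} (A : Fin r → Finset α) (B : Fin s → Finset α) (b : Fin s → α)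
    (hbinj : Function.Injective b)
    (hbA : ∀ i j, b i ∉ A j)
    (hA1 : ∀ j, (↑(A j) : Set α) ⊆ ↑T1.verts)
    (hb1 : ∀ i, b i ∈ T1.verts)
    (hAB : ∀ j i, ∀ x ∈ A j, x ∉ B i)
    (hbb : ∀ i i', i ≠ i' → T1.theta (b i) (b i') = 0)
    (hcase : ∀ i j, (∀ u ∈ A j, T1.theta (b i) u = 1) ∨ (∀ u ∈ A j, T1.theta (b i) u = -1))
    (hTverts : (↑T.verts : Set α) = (⋃ j, (↑(A j) : Set α)) ∪ ⋃ i, (↑(B i) : Set α))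
    (hTA : ∀ j j', ∀ u ∈ A j, ∀ v ∈ A j', T.theta u v = T1.theta u v)
    (hcross : ∀ j i, ∀ u ∈ A j, ∀ v ∈ B i,
        ((∀ x ∈ A j, T1.theta (b i) x = 1) → T.theta u v = 1) ∧
        ((∀ x ∈ A j, T1.theta (b i) x = -1) → T.theta u v = -1))
    (F1 : Finset (Set α × Set α)) (hF1 : FTG.IsCSSeparator T1 F1)
    (K S : Set α) (hK : T.IsClique K) (hS : T.IsStable S) (hd : Disjoint K S)
    (hsplit : ∀ i, ¬((K ∩ ↑(B i)).Nonempty ∧ (S ∩ ↑(B i)).Nonempty)) :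
    ∃ c ∈ F1, K ⊆ (liftCut ↑T.verts (⋃ j, (↑(A j) : Set α)) B b c).1 ∧
      S ⊆ (liftCut ↑T.verts (⋃ j, (↑(A j) : Set α)) B b c).2 := by
  set AU : Set α := ⋃ j, (↑(A j) : Set α) with hAUdef
  set K' : Set α := (K ∩ AU) ∪ (b '' {i | (K ∩ ↑(B i)).Nonempty}) with hK'def
  set S' : Set α := (S ∩ AU) ∪ (b '' {i | (S ∩ ↑(B i)).Nonempty}) with hS'def
  have hAUsub : AU ⊆ ↑T1.verts := iUnion_subset fun j => hA1 j
  -- K' is a clique of T1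
  have hK'clique : T1.IsClique K' := by
    constructor
    · rintro x (⟨hxK, hxA⟩ | ⟨i, hi, rfl⟩)
      · exact hAUsub hxA
      · exact hb1 i
    · rintro x (⟨hxK, hxA⟩ | ⟨i, hi, rfl⟩) y (⟨hyK, hyA⟩ | ⟨i', hi', rfl⟩) hxy
      · obtain ⟨j, hxj⟩ := mem_iUnion.1 hxA
        obtain ⟨j', hyj'⟩ := mem_iUnion.1 hyA
        refine ⟨hA1 j hxj, hA1 j' hyj', hxy, ?_⟩
        rw [← hTA j j' x hxj y hyj']
        exact (hK.2 hxK hyK hxy).2.2.2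
      · obtain ⟨j, hxj⟩ := mem_iUnion.1 hxA
        obtain ⟨v, hvK, hvB⟩ := hi'
        refine ⟨hA1 j hxj, hb1 i', hxy, ?_⟩
        rcases hcase i' j with hpos | hneg
        · rw [T1.symm, hpos x hxj]; norm_num
        · have hxv : x ≠ v := fun h => hAB j i' x hxj (h ▸ hvB)
          have := (hcross j i' x hxj v hvB).2 hneg
          have := (hK.2 hxK hvK hxv).2.2.2
          omega
      · obtain ⟨j, hyj⟩ := mem_iUnion.1 hyA
        obtain ⟨v, hvK, hvB⟩ := hi
        refine ⟨hb1 i, hA1 j hyj, hxy, ?_⟩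
        rcases hcase i j with hpos | hneg
        · rw [hpos y hyj]; norm_num
        · have hyv : y ≠ v := fun h => hAB j i y hyj (h ▸ hvB)
          have := (hcross j i y hyj v hvB).2 hneg
          have := (hK.2 hyK hvK hyv).2.2.2
          omega
      · have hii' : i ≠ i' := fun h => hxy (by rw [h])
        exact ⟨hb1 i, hb1 i', hxy, by rw [hbb i i' hii']⟩
  -- S' is a stable set of T1
  have hS'stable : T1.IsStable S' := by
    constructor
    · rintro x (⟨hxS, hxA⟩ | ⟨i, hi, rfl⟩)
      · exact hAUsub hxA
      · exact hb1 i
    · rintro x (⟨hxS, hxA⟩ | ⟨i, hi, rfl⟩) y (⟨hyS, hyA⟩ | ⟨i', hi', rfl⟩) hxy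
      · obtain ⟨j, hxj⟩ := mem_iUnion.1 hxA
        obtain ⟨j', hyj'⟩ := mem_iUnion.1 hyA
        refine ⟨hA1 j hxj, hA1 j' hyj', hxy, ?_⟩
        rw [← hTA j j' x hxj y hyj']
        exact (hS.2 hxS hyS hxy).2.2.2
      · obtain ⟨j, hxj⟩ := mem_iUnion.1 hxA
        obtain ⟨v, hvS, hvB⟩ := hi'
        refine ⟨hA1 j hxj, hb1 i', hxy, ?_⟩
        rcases hcase i' j with hpos | hneg
        · have hxv : x ≠ v := fun h => hAB j i' x hxj (h ▸ hvB)
          have := (hcross j i' x hxj v hvB).1 hpos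
          have := (hS.2 hxS hvS hxv).2.2.2
          omega
        · rw [T1.symm, hneg x hxj]; norm_num
      · obtain ⟨j, hyj⟩ := mem_iUnion.1 hyA
        obtain ⟨v, hvS, hvB⟩ := hi
        refine ⟨hb1 i, hA1 j hyj, hxy, ?_⟩
        rcases hcase i j with hpos | hneg
        · have hyv : y ≠ v := fun h => hAB j i y hyj (h ▸ hvB)
          have := (hcross j i y hyj v hvB).1 hpos
          have := (hS.2 hyS hvS hyv).2.2.2
          omega
        · rw [hneg y hyj]; norm_num
      · have hii' : i ≠ i' := fun h => hxy (by rw [h])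
        exact ⟨hb1 i, hb1 i', hxy, by rw [hbb i i' hii']⟩
  -- K' and S' are disjoint
  have hd' : Disjoint K' S' := by
    rw [Set.disjoint_left]
    rintro x (⟨hxK, hxA⟩ | ⟨i, hi, rfl⟩) (⟨hxS, hxAU⟩ | ⟨i', hi', heq⟩)
    · exact hd.le_bot ⟨hxK, hxS⟩
    · obtain ⟨j, hxj⟩ := mem_iUnion.1 hxA
      exact hbA i' j (heq ▸ hxj)
    · obtain ⟨j, hxj⟩ := mem_iUnion.1 hxAU
      exact hbA i j hxj
    · have hii' : i' = i := hbinj heq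
      exact hsplit i ⟨hi, hii' ▸ hi'⟩
  obtain ⟨c, hc, hKc, hSc⟩ := hF1.2 K' S' hK'clique hS'stable hd'
  have hcut := hF1.1 c hc
  refine ⟨c, hc, ?_, ?_⟩
  · -- K ⊆ first part of lifted cut
    intro x hxK
    have hxT : x ∈ (↑T.verts : Set α) := hK.1 hxK
    rw [hTverts] at hxT
    rcases hxT with hxA | hxB
    · exact Or.inl ⟨hKc (Or.inl ⟨hxK, hxA⟩), hxA⟩
    · obtain ⟨i, hxi⟩ := mem_iUnion.1 hxB
      refine Or.inr (mem_iUnion₂.2 ⟨i, ?_, hxi⟩)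
      exact hKc (Or.inr ⟨i, ⟨x, hxK, hxi⟩, rfl⟩)
  · -- S ⊆ second part of lifted cut
    intro x hxS
    have hxT : x ∈ (↑T.verts : Set α) := hS.1 hxS
    refine ⟨hxT, ?_⟩
    rintro (⟨hxc1, hxA⟩ | hxB)
    · have : x ∈ c.2 := hSc (Or.inl ⟨hxS, hxA⟩)
      exact hcut.1.le_bot ⟨hxc1, this⟩
    · obtain ⟨i, hbi, hxi⟩ := mem_iUnion₂.1 hxB
      have : b i ∈ c.2 := hSc (Or.inr ⟨i, ⟨x, hxS, hxi⟩, rfl⟩)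
      exact hcut.1.le_bot ⟨hbi, this⟩

/-- If T is the generalized k-join of T1 and T2 which admit CS-separators
of sizes m1 and m2 respectively, then T admits a CS-separator of size at most m1 + m2. -/
theorem stmt_14 {α : Type} [DecidableEq α] (k : ℕ) (hk : 1 ≤ k) (T T1 T2 : FTG α)
    (hjoin : FTG.IsGenJoin k T T1 T2) (m1 m2 : ℕ)
    (h1 : ∃ F, FTG.IsCSSeparator T1 F ∧ F.card = m1)
    (h2 : ∃ F, FTG.IsCSSeparator T2 F ∧ F.card = m2) :
    ∃ F, FTG.IsCSSeparator T F ∧ F.card ≤ m1 + m2 := by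
  classical
  obtain ⟨F1, hF1, hF1card⟩ := h1
  obtain ⟨F2, hF2, hF2card⟩ := h2
  obtain ⟨r, s, A, B, a, b, hr1, hrk, hs1, hsk, hAne, hBne, hAdisj, hBdisj, hainj, hbinj,
    hbA, haB, hT12, hT1v, hT2v, hbb, haa, hcases, hTv, hTA, hTB, hcross⟩ := hjoin
  -- basic inclusions
  have hA1 : ∀ j, (↑(A j) : Set α) ⊆ ↑T1.verts := by
    intro j x hx
    rw [hT1v]
    exact Finset.mem_union_left _ (Finset.mem_biUnion.2 ⟨j, Finset.mem_univ _, hx⟩)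
  have hB2 : ∀ i, (↑(B i) : Set α) ⊆ ↑T2.verts := by
    intro i x hx
    rw [hT2v]
    exact Finset.mem_union_left _ (Finset.mem_biUnion.2 ⟨i, Finset.mem_univ _, hx⟩)
  have hb1 : ∀ i, b i ∈ T1.verts := by
    intro i
    rw [hT1v]
    exact Finset.mem_union_right _ (Finset.mem_image.2 ⟨i, Finset.mem_univ _, rfl⟩)
  have ha2 : ∀ j, a j ∈ T2.verts := by
    intro j
    rw [hT2v]
    exact Finset.mem_union_right _ (Finset.mem_image.2 ⟨j, Finset.mem_univ _, rfl⟩)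
  have hAB : ∀ j i, ∀ x ∈ A j, x ∉ B i := by
    intro j i x hxA hxB
    exact (Finset.disjoint_left.1 hT12) (hA1 j hxA) (hB2 i hxB)
  have hBA : ∀ i j, ∀ x ∈ B i, x ∉ A j := fun i j x hxB hxA => hAB j i x hxA hxB
  -- the vertex set of T as a set
  have hTverts : (↑T.verts : Set α) = (⋃ j, (↑(A j) : Set α)) ∪ ⋃ i, (↑(B i) : Set α) := by
    rw [hTv]
    ext x
    simp [Finset.mem_biUnion, Set.mem_iUnion]
  have hTverts2 : (↑T.verts : Set α) = (⋃ i, (↑(B i) : Set α)) ∪ ⋃ j, (↑(A j) : Set α) := by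
    rw [hTverts, Set.union_comm]
  -- agreement of theta on each side
  have hTA' : ∀ j j', ∀ u ∈ A j, ∀ v ∈ A j', T.theta u v = T1.theta u v := by
    intro j j' u hu v hv
    exact hTA u (Finset.mem_biUnion.2 ⟨j, Finset.mem_univ _, hu⟩) v
      (Finset.mem_biUnion.2 ⟨j', Finset.mem_univ _, hv⟩)
  have hTB' : ∀ i i', ∀ u ∈ B i, ∀ v ∈ B i', T.theta u v = T2.theta u v := by
    intro i i' u hu v hv
    exact hTB u (Finset.mem_biUnion.2 ⟨i, Finset.mem_univ _, hu⟩) v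
      (Finset.mem_biUnion.2 ⟨i', Finset.mem_univ _, hv⟩)
  -- case dichotomies
  have hcase1 : ∀ i j, (∀ u ∈ A j, T1.theta (b i) u = 1) ∨ (∀ u ∈ A j, T1.theta (b i) u = -1) :=
    fun i j => (hcases i j).imp (·.1) (·.1)
  have hcase2 : ∀ j i, (∀ u ∈ B i, T2.theta (a j) u = 1) ∨ (∀ u ∈ B i, T2.theta (a j) u = -1) :=
    fun j i => (hcases i j).imp (·.2) (·.2)
  -- crossing adjacency seen from the T2 side
  have hcross2 : ∀ i j, ∀ v ∈ B i, ∀ u ∈ A j,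
      ((∀ x ∈ B i, T2.theta (a j) x = 1) → T.theta v u = 1) ∧
      ((∀ x ∈ B i, T2.theta (a j) x = -1) → T.theta v u = -1) := by
    intro i j v hv u hu
    obtain ⟨y, hy⟩ := hBne i
    constructor
    · intro hall
      rcases hcases i j with hpos | hneg
      · rw [T.symm]
        exact (hcross j i u hu v hv).1 hpos.1
      · have h1 := hall y hy
        have h2 := hneg.2 y hy
        omega
    · intro hall
      rcases hcases i j with hpos | hneg
      · have h1 := hall y hy
        have h2 := hpos.2 y hy
        omega
      · rw [T.symm]
        exact (hcross j i u hu v hv).2 hneg.1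
  -- the family of cuts
  set f : Set α × Set α → Set α × Set α := liftCut ↑T.verts (⋃ j, (↑(A j) : Set α)) B b with hf
  set g : Set α × Set α → Set α × Set α := liftCut ↑T.verts (⋃ i, (↑(B i) : Set α)) A a with hg
  refine ⟨F1.image f ∪ F2.image g, ⟨?_, ?_⟩, ?_⟩
  · -- every element is a cut
    intro c hc
    rcases Finset.mem_union.1 hc with hc | hc
    · obtain ⟨c', _, rfl⟩ := Finset.mem_image.1 hc
      exact liftCut_isCut T _ B b c'
        (by rw [hTverts]; exact Set.subset_union_left)
        (fun i => by rw [hTverts]; exact Set.subset_union_of_subset_right (Set.subset_iUnion (fun i => (↑(B i) : Set α)) i) _)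
    · obtain ⟨c', _, rfl⟩ := Finset.mem_image.1 hc
      exact liftCut_isCut T _ A a c'
        (by rw [hTverts]; exact Set.subset_union_right)
        (fun j => by rw [hTverts]; exact Set.subset_union_of_subset_left (Set.subset_iUnion (fun j => (↑(A j) : Set α)) j) _)
  · -- separation
    intro K S hK hS hd
    by_cases hcB : ∀ i, ¬((K ∩ ↑(B i)).Nonempty ∧ (S ∩ ↑(B i)).Nonempty)
    · obtain ⟨c, hc, h1, h2⟩ := key_lemma T T1 A B b hbinj hbA hA1 hb1 hAB hbb hcase1
        hTverts hTA' hcross F1 hF1 K S hK hS hd hcB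
      exact ⟨f c, Finset.mem_union_left _ (Finset.mem_image_of_mem f hc), h1, h2⟩
    · push_neg at hcB
      obtain ⟨i, ⟨v, hvK, hvB⟩, ⟨v', hv'S, hv'B⟩⟩ := hcB
      have hcA : ∀ j, ¬((K ∩ ↑(A j)).Nonempty ∧ (S ∩ ↑(A j)).Nonempty) := by
        rintro j ⟨⟨u, huK, huA⟩, ⟨u', hu'S, hu'A⟩⟩
        rcases hcases i j with hpos | hneg
        · have h1 := (hcross j i u' hu'A v' hv'B).1 hpos.1
          have hne : u' ≠ v' := fun h => hAB j i u' hu'A (h ▸ hv'B)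
          have h2 := (hS.2 hu'S hv'S hne).2.2.2
          omega
        · have h1 := (hcross j i u huA v hvB).2 hneg.1
          have hne : u ≠ v := fun h => hAB j i u huA (h ▸ hvB)
          have h2 := (hK.2 huK hvK hne).2.2.2
          omega
      obtain ⟨c, hc, h1, h2⟩ := key_lemma T T2 B A a hainj haB hB2 ha2 hBA haa hcase2
        hTverts2 hTB' hcross2 F2 hF2 K S hK hS hd hcA
      exact ⟨g c, Finset.mem_union_right _ (Finset.mem_image_of_mem g hc), h1, h2⟩
  · -- cardinality
    calc (F1.image f ∪ F2.image g).card ≤ (F1.image f).card + (F2.image g).card :=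
          Finset.card_union_le _ _
      _ ≤ F1.card + F2.card := add_le_add Finset.card_image_le Finset.card_image_le
      _ = m1 + m2 := by rw [hF1card, hF2card]
end

section
/- Let 𝒞 be a class of finite simple graphs, k ≥ 1, and c ≥ 1 a real number. Suppose there exists p' > 0 such that every graph G ∈ 𝒞 with at least one vertex admits a CS-separator of size at most p'·|V(G)|^c. Then there exists p > 0 such that every trigraph T in closure(𝒞^{≤k}) with at least one vertex admits a CS-separator of size at most p·|V(T)|^{k²c}. -/
section Aux

variable {α : Type} [DecidableEq α]

open Finset

/-- Superadditivity of rpow for exponents ≥ 1. -/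
lemma rpow_superadd {x y e : ℝ} (hx : 0 ≤ x) (hy : 0 ≤ y) (he : 1 ≤ e) :
    x ^ e + y ^ e ≤ (x + y) ^ e := by
  have h := NNReal.add_rpow_le_rpow_add (x.toNNReal) (y.toNNReal) he
  have h2 := NNReal.coe_le_coe.mpr h
  rw [NNReal.coe_add, NNReal.coe_rpow, NNReal.coe_rpow, NNReal.coe_rpow, NNReal.coe_add,
    Real.coe_toNNReal _ hx, Real.coe_toNNReal _ hy] at h2
  exact h2

/-- Every trigraph has a CS-separator of size at most `2^n`. -/
lemma FTG.trivial_sep (T : FTG α) :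
    ∃ F, T.IsCSSeparator F ∧ F.card ≤ 2 ^ T.verts.card := by
  classical
  set σ : Finset α → Set α × Set α := fun s => ((s : Set α), ((T.verts \ s : Finset α) : Set α))
    with hσ
  refine ⟨T.verts.powerset.image σ, ⟨?_, ?_⟩, ?_⟩
  · rintro c hc
    simp only [mem_image, mem_powerset] at hc
    obtain ⟨s, hs, rfl⟩ := hc
    constructor
    · rw [Set.disjoint_left]
      intro x hx hx2
      simp only [hσ, Finset.coe_sdiff, Set.mem_diff, Finset.mem_coe] at hx hx2
      exact hx2.2 hx
    · show (↑s ∪ ↑(T.verts \ s) : Set α) = ↑T.verts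
      rw [← Finset.coe_union, Finset.union_sdiff_of_subset hs]
  · intro K S hK hS hd
    refine ⟨σ (T.verts.filter (· ∈ K)), ?_, ?_, ?_⟩
    · simp only [mem_image, mem_powerset]
      exact ⟨T.verts.filter (· ∈ K), filter_subset _ _, rfl⟩
    · intro x hx
      simp only [hσ, Finset.coe_filter, Set.mem_setOf_eq]
      exact ⟨hK.1 hx, hx⟩
    · intro x hx
      simp only [hσ, Finset.coe_sdiff, Set.mem_diff, Finset.mem_coe, mem_filter]
      exact ⟨hS.1 hx, fun hc => (Set.disjoint_left.mp hd hc.2) hx⟩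
  · exact (card_image_le).trans (le_of_eq (card_powerset _))

/-- The size-bounding function for the induction. -/
noncomputable def Hfun (k : ℕ) (e q : ℝ) (n : ℕ) : ℝ :=
  if n ≤ 2 * k then (2 : ℝ) ^ n else q * ((n - 2 * k : ℕ) : ℝ) ^ e

lemma Hfun_nonneg (k : ℕ) (e q : ℝ) (hq : 0 ≤ q) (n : ℕ) : 0 ≤ Hfun k e q n := by
  unfold Hfun
  split
  · positivity
  · have : (0:ℝ) ≤ ((n - 2*k : ℕ) : ℝ) := by positivity
    have := Real.rpow_nonneg this e
    positivity

lemma num_join (k : ℕ) (hk : 1 ≤ k) (e q : ℝ) (he : 1 ≤ e) (hq : 2 * 4 ^ k ≤ q)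
    (n n1 n2 : ℕ) (h1 : n1 + 1 ≤ n) (h2 : n2 + 1 ≤ n) (h12 : n1 + n2 ≤ n + 2 * k) :
    Hfun k e q n1 + Hfun k e q n2 ≤ Hfun k e q n := by
  have hq0 : (0:ℝ) < q := lt_of_lt_of_le (by positivity) hq
  have h4 : (4:ℝ) ^ k ≤ q := le_trans (by nlinarith [pow_pos (by norm_num : (0:ℝ) < 4) k]) hq
  have h2pow : ∀ m : ℕ, m ≤ 2 * k → (2:ℝ) ^ m ≤ 4 ^ k := by
    intro m hm
    calc (2:ℝ) ^ m ≤ 2 ^ (2 * k) := pow_le_pow_right₀ (by norm_num) hm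
      _ = 4 ^ k := by rw [pow_mul]; norm_num
  have hgap : ∀ m1 m : ℕ, m1 + 1 ≤ m → ((m1:ℝ)) ^ e + 1 ≤ ((m:ℝ)) ^ e := by
    intro m1 m hmle
    have h1e : ((m1:ℝ)) ^ e + (1:ℝ) ^ e ≤ ((m1:ℝ) + 1) ^ e :=
      rpow_superadd (by positivity) (by norm_num) he
    rw [Real.one_rpow] at h1e
    refine le_trans h1e ?_
    refine Real.rpow_le_rpow (by positivity) ?_ (by linarith)
    exact_mod_cast hmle
  by_cases hn : n ≤ 2 * k
  · have hn1 : n1 ≤ 2 * k := by omega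
    have hn2 : n2 ≤ 2 * k := by omega
    simp only [Hfun]
    rw [if_pos hn1, if_pos hn2, if_pos hn]
    have e1 : (2:ℝ) ^ n1 ≤ 2 ^ (n - 1) := pow_le_pow_right₀ (by norm_num) (by omega)
    have e2 : (2:ℝ) ^ n2 ≤ 2 ^ (n - 1) := pow_le_pow_right₀ (by norm_num) (by omega)
    have : (2:ℝ) ^ (n-1) + 2 ^ (n-1) = 2 ^ n := by
      rw [← two_mul, ← pow_succ']
      congr 1
      omega
    linarith
  · have hme1 : (1:ℝ) ≤ ((n - 2*k : ℕ):ℝ) ^ e := by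
      calc (1:ℝ) = 1 ^ e := (Real.one_rpow e).symm
        _ ≤ ((n - 2*k : ℕ):ℝ) ^ e := by
            refine Real.rpow_le_rpow (by norm_num) ?_ (by linarith)
            have : 1 ≤ n - 2*k := by omega
            exact_mod_cast this
    by_cases ha : n1 ≤ 2 * k <;> by_cases hb : n2 ≤ 2 * k
    · simp only [Hfun]
      rw [if_pos ha, if_pos hb, if_neg hn]
      have i1 := h2pow n1 ha
      have i2 := h2pow n2 hb
      calc (2:ℝ) ^ n1 + 2 ^ n2 ≤ 2 * 4 ^ k := by linarith
        _ ≤ q := hq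
        _ = q * 1 := (mul_one q).symm
        _ ≤ q * ((n - 2*k : ℕ):ℝ) ^ e := mul_le_mul_of_nonneg_left hme1 (le_of_lt hq0)
    · simp only [Hfun]
      rw [if_pos ha, if_neg hb, if_neg hn]
      push_neg at hb
      have h2n1 : (2:ℝ) ^ n1 ≤ q := le_trans (h2pow n1 ha) h4
      have key := hgap (n2 - 2*k) (n - 2*k) (by omega)
      calc (2:ℝ) ^ n1 + q * ((n2 - 2*k : ℕ):ℝ) ^ e ≤ q + q * ((n2 - 2*k : ℕ):ℝ) ^ e := by
            linarith
        _ = q * (((n2 - 2*k : ℕ):ℝ) ^ e + 1) := by ring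
        _ ≤ q * ((n - 2*k : ℕ):ℝ) ^ e := mul_le_mul_of_nonneg_left key (le_of_lt hq0)
    · simp only [Hfun]
      rw [if_neg ha, if_pos hb, if_neg hn]
      push_neg at ha
      have h2n2 : (2:ℝ) ^ n2 ≤ q := le_trans (h2pow n2 hb) h4
      have key := hgap (n1 - 2*k) (n - 2*k) (by omega)
      calc q * ((n1 - 2*k : ℕ):ℝ) ^ e + (2:ℝ) ^ n2 ≤ q * ((n1 - 2*k : ℕ):ℝ) ^ e + q := by
            linarith
        _ = q * (((n1 - 2*k : ℕ):ℝ) ^ e + 1) := by ring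
        _ ≤ q * ((n - 2*k : ℕ):ℝ) ^ e := mul_le_mul_of_nonneg_left key (le_of_lt hq0)
    · simp only [Hfun]
      rw [if_neg ha, if_neg hb, if_neg hn]
      push_neg at ha hb
      have hsum : (n1 - 2*k) + (n2 - 2*k) ≤ n - 2*k := by omega
      have key : ((n1 - 2*k : ℕ):ℝ) ^ e + ((n2 - 2*k : ℕ):ℝ) ^ e ≤ ((n - 2*k : ℕ):ℝ) ^ e := by
        refine le_trans (rpow_superadd (by positivity) (by positivity) he) ?_
        refine Real.rpow_le_rpow (by positivity) ?_ (by linarith)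
        push_cast
        exact_mod_cast hsum
      calc q * ((n1 - 2*k : ℕ):ℝ) ^ e + q * ((n2 - 2*k : ℕ):ℝ) ^ e
          = q * (((n1 - 2*k : ℕ):ℝ) ^ e + ((n2 - 2*k : ℕ):ℝ) ^ e) := by ring
        _ ≤ q * ((n - 2*k : ℕ):ℝ) ^ e := mul_le_mul_of_nonneg_left key (le_of_lt hq0)

lemma num_base (k : ℕ) (hk : 1 ≤ k) (c e p' q : ℝ) (hc : 1 ≤ c) (hce : c * k ≤ e)
    (he : 1 ≤ e) (hp' : 0 < p')
    (hq : p' ^ k * ((2 * k + 1 : ℕ) : ℝ) ^ (c * (k:ℝ)) ≤ q) (n : ℕ) (hn : 2 * k < n) :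
    p' ^ k * (n : ℝ) ^ (c * (k:ℝ)) ≤ Hfun k e q n := by
  rw [Hfun, if_neg (by omega)]
  set m : ℕ := n - 2 * k with hm
  have hm1 : 1 ≤ m := by omega
  have hnle : n ≤ (2 * k + 1) * m := by
    have : 2 * k * 1 ≤ 2 * k * m := Nat.mul_le_mul_left _ hm1
    calc n = 2 * k + m := by omega
      _ ≤ 2 * k * m + m := by omega
      _ = (2 * k + 1) * m := by ring
  have hck0 : (0:ℝ) ≤ c * (k:ℝ) := by positivity
  have hmR : (1:ℝ) ≤ (m:ℝ) := by exact_mod_cast hm1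
  have step1 : (n:ℝ) ^ (c * (k:ℝ)) ≤ (((2*k+1 : ℕ):ℝ) * (m:ℝ)) ^ (c * (k:ℝ)) := by
    refine Real.rpow_le_rpow (by positivity) ?_ hck0
    exact_mod_cast hnle
  have step2 : (((2*k+1 : ℕ):ℝ) * (m:ℝ)) ^ (c * (k:ℝ))
      = ((2*k+1 : ℕ):ℝ) ^ (c * (k:ℝ)) * (m:ℝ) ^ (c * (k:ℝ)) :=
    Real.mul_rpow (by positivity) (by positivity)
  have step3 : (m:ℝ) ^ (c * (k:ℝ)) ≤ (m:ℝ) ^ e :=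
    Real.rpow_le_rpow_of_exponent_le hmR hce
  have hA : (0:ℝ) ≤ ((2*k+1 : ℕ):ℝ) ^ (c * (k:ℝ)) := Real.rpow_nonneg (by positivity) _
  have hp'k : (0:ℝ) ≤ p' ^ k := by positivity
  calc p' ^ k * (n:ℝ) ^ (c * (k:ℝ))
      ≤ p' ^ k * (((2*k+1 : ℕ):ℝ) ^ (c * (k:ℝ)) * (m:ℝ) ^ (c * (k:ℝ))) := by
        rw [← step2]; exact mul_le_mul_of_nonneg_left step1 hp'k
    _ ≤ p' ^ k * (((2*k+1 : ℕ):ℝ) ^ (c * (k:ℝ)) * (m:ℝ) ^ e) := by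
        refine mul_le_mul_of_nonneg_left ?_ hp'k
        exact mul_le_mul_of_nonneg_left step3 hA
    _ = (p' ^ k * ((2*k+1 : ℕ):ℝ) ^ (c * (k:ℝ))) * (m:ℝ) ^ e := by ring
    _ ≤ q * (m:ℝ) ^ e := by
        refine mul_le_mul_of_nonneg_right hq (Real.rpow_nonneg (by positivity) e)


/-- Lift a CS-separator from a realization `G` to a trigraph `T` of `C^{≤k}`. -/
lemma FTG.base_lift (k : ℕ) (hk : 1 ≤ k) (T G : FTG α)
    (P : Finset (Finset α))
    (hPU : P.biUnion id = T.verts)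
    (hPdisj : ∀ p ∈ P, ∀ q ∈ P, p ≠ q → Disjoint p q)
    (hPcard : ∀ p ∈ P, 1 ≤ p.card ∧ p.card ≤ k)
    (hcross : ∀ u v, u ∈ T.verts → v ∈ T.verts → u ≠ v → T.theta u v = 0 →
      ∀ p ∈ P, (u ∈ p ↔ v ∈ p))
    (hreal : T.IsRealization G)
    (F : Finset (Set α × Set α)) (hF : G.IsCSSeparator F) :
    ∃ F', T.IsCSSeparator F' ∧ F'.card ≤ F.card ^ k := by
  classical
  obtain ⟨hGV, hGgraph, hGsign⟩ := hreal
  have hpart : ∀ x, x ∈ T.verts → ∃ p ∈ P, x ∈ p := by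
    intro x hx
    rw [← hPU] at hx
    simpa using hx
  -- position of a vertex inside its part
  set pos : α → Fin k := fun x =>
    if hx : ∃ p ∈ P, x ∈ p then
      ⟨(hx.choose.toList.idxOf x) % k, Nat.mod_lt _ (by omega)⟩
    else ⟨0, by omega⟩ with hposdef
  have hpos_eq : ∀ p ∈ P, ∀ x ∈ p, (pos x : ℕ) = p.toList.idxOf x := by
    intro p hp x hxp
    have hx : ∃ p ∈ P, x ∈ p := ⟨p, hp, hxp⟩
    have hch : hx.choose = p := by
      by_contra hne
      have h1 := hx.choose_spec
      exact (Finset.disjoint_left.mp (hPdisj _ h1.1 p hp hne) h1.2) hxp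
    have hlt : p.toList.idxOf x < k := by
      have := List.idxOf_lt_length_iff.mpr (Finset.mem_toList.mpr hxp)
      rw [Finset.length_toList] at this
      exact lt_of_lt_of_le this (hPcard p hp).2
    simp only [hposdef, dif_pos hx, hch]
    exact Nat.mod_eq_of_lt hlt
  have hpos_inj : ∀ p ∈ P, ∀ x ∈ p, ∀ y ∈ p, pos x = pos y → x = y := by
    intro p hp x hxp y hyp hxy
    have h1 := hpos_eq p hp x hxp
    have h2 := hpos_eq p hp y hyp
    have : p.toList.idxOf x = p.toList.idxOf y := by
      rw [← h1, ← h2, hxy]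
    exact (List.idxOf_inj (Finset.mem_toList.mpr hxp)).mp this
  -- key: distinct vertices with the same position have nonzero theta
  have hkey : ∀ x ∈ T.verts, ∀ y ∈ T.verts, x ≠ y → pos x = pos y → T.theta x y ≠ 0 := by
    intro x hx y hy hne hpxy h0
    obtain ⟨p, hp, hxp⟩ := hpart x hx
    have hyp : y ∈ p := (hcross x y hx hy hne h0 p hp).mp hxp
    exact hne (hpos_inj p hp x hxp y hyp hpxy)
  set Combine : (Fin k → Set α × Set α) → Set α × Set α := fun g =>
    ({x | x ∈ T.verts ∧ x ∈ (g (pos x)).1}, {x | x ∈ T.verts ∧ x ∉ (g (pos x)).1})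
    with hC
  refine ⟨(Fintype.piFinset (fun _ : Fin k => F)).image Combine, ⟨?_, ?_⟩, ?_⟩
  · rintro c hc
    simp only [mem_image] at hc
    obtain ⟨g, _, rfl⟩ := hc
    constructor
    · rw [Set.disjoint_left]
      rintro x ⟨hx1, hx2⟩ ⟨_, hx4⟩
      exact hx4 hx2
    · apply Set.eq_of_subset_of_subset
      · rintro x (⟨hx, _⟩ | ⟨hx, _⟩) <;> exact hx
      · intro x hx
        by_cases hmem : x ∈ (g (pos x)).1
        · exact Or.inl ⟨hx, hmem⟩
        · exact Or.inr ⟨hx, hmem⟩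
  · intro K S hK hS hd
    -- slices of K and S by position
    have hKi : ∀ i : Fin k, G.IsClique {x | x ∈ K ∧ pos x = i} := by
      intro i
      constructor
      · intro x hx
        rw [hGV]
        exact hK.1 hx.1
      · rintro x ⟨hxK, hxi⟩ y ⟨hyK, hyi⟩ hne
        have hadj := hK.2 hxK hyK hne
        obtain ⟨hxv, hyv, _, hθ⟩ := hadj
        have hne0 : T.theta x y ≠ 0 := hkey x hxv y hyv hne (by rw [hxi, hyi])
        have h1 : T.theta x y = 1 := by
          rcases T.range x y with h | h | h
          · omega
          · exact absurd h hne0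
          · exact h
        have := (hGsign x y hxv hyv hne).1 h1
        exact ⟨by rw [hGV]; exact hxv, by rw [hGV]; exact hyv, hne, by rw [this]; norm_num⟩
    have hSi : ∀ i : Fin k, G.IsStable {x | x ∈ S ∧ pos x = i} := by
      intro i
      constructor
      · intro x hx
        rw [hGV]
        exact hS.1 hx.1
      · rintro x ⟨hxS, hxi⟩ y ⟨hyS, hyi⟩ hne
        have hadj := hS.2 hxS hyS hne
        obtain ⟨hxv, hyv, _, hθ⟩ := hadj
        have hne0 : T.theta x y ≠ 0 := hkey x hxv y hyv hne (by rw [hxi, hyi])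
        have h1 : T.theta x y = -1 := by
          rcases T.range x y with h | h | h
          · exact h
          · exact absurd h hne0
          · omega
        have := (hGsign x y hxv hyv hne).2 h1
        exact ⟨by rw [hGV]; exact hxv, by rw [hGV]; exact hyv, hne, by rw [this]; norm_num⟩
    have hdi : ∀ i : Fin k, Disjoint {x | x ∈ K ∧ pos x = i} {x | x ∈ S ∧ pos x = i} := by
      intro i
      rw [Set.disjoint_left]
      rintro x ⟨hxK, _⟩ ⟨hxS, _⟩
      exact (Set.disjoint_left.mp hd hxK) hxS
    have hex : ∀ i : Fin k, ∃ c ∈ F, {x | x ∈ K ∧ pos x = i} ⊆ c.1 ∧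
        {x | x ∈ S ∧ pos x = i} ⊆ c.2 :=
      fun i => hF.2 _ _ (hKi i) (hSi i) (hdi i)
    choose g hgF hgK hgS using hex
    refine ⟨Combine g, ?_, ?_, ?_⟩
    · simp only [mem_image]
      exact ⟨g, by simp only [Fintype.mem_piFinset]; exact hgF, rfl⟩
    · intro x hx
      exact ⟨hK.1 hx, hgK (pos x) ⟨hx, rfl⟩⟩
    · intro x hx
      refine ⟨hS.1 hx, fun hmem => ?_⟩
      have h2 : x ∈ (g (pos x)).2 := hgS (pos x) ⟨hx, rfl⟩
      exact (Set.disjoint_left.mp (hF.1 _ (hgF (pos x))).1 hmem) h2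
  · refine (card_image_le).trans (le_of_eq ?_)
    rw [Fintype.card_piFinset]
    simp


/-- Lift a CS-separator through one side of a generalized join. -/
lemma FTG.side_lift (T TX : FTG α) {r s : ℕ}
    (A : Fin r → Finset α) (Bs : Fin s → Finset α) (b : Fin s → α)
    (hBd : ∀ i i', i ≠ i' → Disjoint (Bs i) (Bs i'))
    (hbinj : Function.Injective b)
    (hbA : ∀ i j, b i ∉ A j)
    (hVX : TX.verts = Finset.univ.biUnion A ∪ Finset.univ.image b)
    (hV : T.verts = Finset.univ.biUnion A ∪ Finset.univ.biUnion Bs)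
    (hdisjAB : Disjoint (Finset.univ.biUnion A) (Finset.univ.biUnion Bs))
    (hbb : ∀ i i', i ≠ i' → TX.theta (b i) (b i') = 0)
    (hagree : ∀ u ∈ Finset.univ.biUnion A, ∀ v ∈ Finset.univ.biUnion A,
      T.theta u v = TX.theta u v)
    (hcrossrule : ∀ j i, ∀ u ∈ A j, ∀ v ∈ Bs i,
      ((∀ x ∈ A j, TX.theta (b i) x = 1) → T.theta u v = 1) ∧
      ((∀ x ∈ A j, TX.theta (b i) x = -1) → T.theta u v = -1))
    (hdich : ∀ i j, (∀ x ∈ A j, TX.theta (b i) x = 1) ∨ (∀ x ∈ A j, TX.theta (b i) x = -1))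
    (F : Finset (Set α × Set α)) (hF : TX.IsCSSeparator F) :
    ∃ F' : Finset (Set α × Set α), (∀ c ∈ F', T.IsCut c) ∧ F'.card ≤ F.card ∧
      ∀ K S : Set α, T.IsClique K → T.IsStable S → Disjoint K S →
        (∀ i, ¬ ((K ∩ ↑(Bs i)).Nonempty ∧ (S ∩ ↑(Bs i)).Nonempty)) →
        ∃ c ∈ F', K ⊆ c.1 ∧ S ⊆ c.2 := by
  classical
  set UA : Set α := ↑(Finset.univ.biUnion A) with hUA
  have hmemUA : ∀ x, x ∈ UA ↔ ∃ j, x ∈ A j := by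
    intro x
    simp [hUA]
  have hUAX : ∀ x, x ∈ UA → x ∈ TX.verts := by
    intro x hx
    rw [hVX]
    exact Finset.mem_union_left _ hx
  have hbX : ∀ i, b i ∈ TX.verts := by
    intro i
    rw [hVX]
    exact Finset.mem_union_right _ (Finset.mem_image.mpr ⟨i, Finset.mem_univ i, rfl⟩)
  have hbUA : ∀ i, b i ∉ UA := by
    intro i hmem
    obtain ⟨j, hj⟩ := (hmemUA _).mp hmem
    exact hbA i j hj
  have hUAB : ∀ x, x ∈ UA → ∀ i, x ∉ Bs i := by
    intro x hx i hxB
    exact (Finset.disjoint_left.mp hdisjAB (Finset.mem_coe.mp hx))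
      (Finset.mem_biUnion.mpr ⟨i, Finset.mem_univ i, hxB⟩)
  have hVmem : ∀ x, x ∈ T.verts ↔ (x ∈ UA ∨ ∃ i, x ∈ Bs i) := by
    intro x
    rw [hV]
    simp [hUA, Finset.mem_union, Finset.mem_biUnion]
  set σ : Set α × Set α → Set α × Set α := fun c =>
    ({x | (x ∈ UA ∧ x ∈ c.1) ∨ ∃ i, x ∈ Bs i ∧ b i ∈ c.1},
     {x | (x ∈ UA ∧ x ∈ c.2) ∨ ∃ i, x ∈ Bs i ∧ b i ∈ c.2}) with hσ
  refine ⟨F.image σ, ?_, card_image_le, ?_⟩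
  · rintro c hc
    simp only [mem_image] at hc
    obtain ⟨d, hdF, rfl⟩ := hc
    obtain ⟨hdd, hdu⟩ := hF.1 d hdF
    constructor
    · rw [Set.disjoint_left]
      rintro x (⟨hx1, hx2⟩ | ⟨i, hxB, hbi⟩) h2
      · rcases h2 with ⟨_, hx4⟩ | ⟨i, hxB, _⟩
        · exact (Set.disjoint_left.mp hdd hx2) hx4
        · exact hUAB x hx1 i hxB
      · rcases h2 with ⟨hx3, _⟩ | ⟨i', hxB', hbi'⟩
        · exact hUAB x hx3 i hxB
        · have : i = i' := by
            by_contra hne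
            exact (Finset.disjoint_left.mp (hBd i i' hne) hxB) hxB'
          subst this
          exact (Set.disjoint_left.mp hdd hbi) hbi'
    · apply Set.eq_of_subset_of_subset
      · rintro x (h | h)
        · rcases h with ⟨hx, _⟩ | ⟨i, hxB, _⟩
          · exact (hVmem x).mpr (Or.inl hx)
          · exact (hVmem x).mpr (Or.inr ⟨i, hxB⟩)
        · rcases h with ⟨hx, _⟩ | ⟨i, hxB, _⟩
          · exact (hVmem x).mpr (Or.inl hx)
          · exact (hVmem x).mpr (Or.inr ⟨i, hxB⟩)
      · intro x hx
        rcases (hVmem x).mp hx with hx | ⟨i, hxB⟩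
        · have hxX : x ∈ TX.verts := hUAX x hx
          have : x ∈ d.1 ∪ d.2 := by
            rw [hdu]
            exact hxX
          rcases this with h | h
          · exact Or.inl (Or.inl ⟨hx, h⟩)
          · exact Or.inr (Or.inl ⟨hx, h⟩)
        · have : b i ∈ d.1 ∪ d.2 := by
            rw [hdu]
            exact hbX i
          rcases this with h | h
          · exact Or.inl (Or.inr ⟨i, hxB, h⟩)
          · exact Or.inr (Or.inr ⟨i, hxB, h⟩)
  · intro K S hK hS hd hno
    set K1 : Set α := (K ∩ UA) ∪ {x | ∃ i, x = b i ∧ (K ∩ ↑(Bs i)).Nonempty} with hK1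
    set S1 : Set α := (S ∩ UA) ∪ {x | ∃ i, x = b i ∧ (S ∩ ↑(Bs i)).Nonempty} with hS1
    -- adjacency between a vertex of K ∩ UA and b i with K meeting Bs i
    have hcase1 : ∀ (u : α), u ∈ K → u ∈ UA → ∀ i, (K ∩ ↑(Bs i)).Nonempty →
        TX.theta (b i) u = 1 := by
      intro u huK huUA i ⟨x, hxK, hxB⟩
      obtain ⟨j, hj⟩ := (hmemUA _).mp huUA
      have hne : u ≠ x := by
        intro heq
        exact hUAB u huUA i (heq ▸ hxB)
      have hadj := hK.2 huK hxK hne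
      rcases hdich i j with hcase | hcase
      · exact hcase u hj
      · have := (hcrossrule j i u hj x hxB).2 hcase
        obtain ⟨_, _, _, hθ⟩ := hadj
        omega
    have hcase2 : ∀ (u : α), u ∈ S → u ∈ UA → ∀ i, (S ∩ ↑(Bs i)).Nonempty →
        TX.theta (b i) u = -1 := by
      intro u huS huUA i ⟨x, hxS, hxB⟩
      obtain ⟨j, hj⟩ := (hmemUA _).mp huUA
      have hne : u ≠ x := by
        intro heq
        exact hUAB u huUA i (heq ▸ hxB)
      have hadj := hS.2 huS hxS hne
      rcases hdich i j with hcase | hcase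
      · have := (hcrossrule j i u hj x hxB).1 hcase
        obtain ⟨_, _, _, hθ⟩ := hadj
        omega
      · exact hcase u hj
    have hK1clique : TX.IsClique K1 := by
      constructor
      · rintro x (⟨_, hx⟩ | ⟨i, rfl, _⟩)
        · exact hUAX x hx
        · exact hbX i
      · rintro x hx y hy hne
        rcases hx with ⟨hxK, hxUA⟩ | ⟨i, rfl, hi⟩ <;>
          rcases hy with ⟨hyK, hyUA⟩ | ⟨i', rfl, hi'⟩
        · refine ⟨hUAX x hxUA, hUAX y hyUA, hne, ?_⟩
          have := hK.2 hxK hyK hne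
          obtain ⟨_, _, _, hθ⟩ := this
          rw [← hagree x hxUA y hyUA]
          exact hθ
        · refine ⟨hUAX x hxUA, hbX i', hne, ?_⟩
          have h1 := hcase1 x hxK hxUA i' hi'
          rw [TX.symm] at h1
          omega
        · refine ⟨hbX i, hUAX y hyUA, hne, ?_⟩
          have h1 := hcase1 y hyK hyUA i hi
          omega
        · have hii : i ≠ i' := fun hii => hne (by rw [hii])
          exact ⟨hbX i, hbX i', hne, by rw [hbb i i' hii]⟩
    have hS1stable : TX.IsStable S1 := by
      constructor
      · rintro x (⟨_, hx⟩ | ⟨i, rfl, _⟩)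
        · exact hUAX x hx
        · exact hbX i
      · rintro x hx y hy hne
        rcases hx with ⟨hxS, hxUA⟩ | ⟨i, rfl, hi⟩ <;>
          rcases hy with ⟨hyS, hyUA⟩ | ⟨i', rfl, hi'⟩
        · refine ⟨hUAX x hxUA, hUAX y hyUA, hne, ?_⟩
          have := hS.2 hxS hyS hne
          obtain ⟨_, _, _, hθ⟩ := this
          rw [← hagree x hxUA y hyUA]
          exact hθ
        · refine ⟨hUAX x hxUA, hbX i', hne, ?_⟩
          have h1 := hcase2 x hxS hxUA i' hi'
          rw [TX.symm] at h1
          omega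
        · refine ⟨hbX i, hUAX y hyUA, hne, ?_⟩
          have h1 := hcase2 y hyS hyUA i hi
          omega
        · have hii : i ≠ i' := fun hii => hne (by rw [hii])
          exact ⟨hbX i, hbX i', hne, by rw [hbb i i' hii]⟩
    have hd1 : Disjoint K1 S1 := by
      rw [Set.disjoint_left]
      rintro x (⟨hxK, hxUA⟩ | ⟨i, rfl, hi⟩) (⟨hxS, hxUA'⟩ | ⟨i', heq, hi'⟩)
      · exact (Set.disjoint_left.mp hd hxK) hxS
      · exact hbUA i' (heq ▸ hxUA)
      · exact hbUA i hxUA'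
      · have : i = i' := hbinj heq
        subst this
        exact hno i ⟨hi, hi'⟩
    obtain ⟨d, hdF, hdK, hdS⟩ := hF.2 K1 S1 hK1clique hS1stable hd1
    refine ⟨σ d, Finset.mem_image.mpr ⟨d, hdF, rfl⟩, ?_, ?_⟩
    · intro x hxK
      have hxv : x ∈ T.verts := hK.1 hxK
      rcases (hVmem x).mp hxv with hx | ⟨i, hxB⟩
      · exact Or.inl ⟨hx, hdK (Or.inl ⟨hxK, hx⟩)⟩
      · exact Or.inr ⟨i, hxB, hdK (Or.inr ⟨i, rfl, ⟨x, hxK, hxB⟩⟩)⟩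
    · intro x hxS
      have hxv : x ∈ T.verts := hS.1 hxS
      rcases (hVmem x).mp hxv with hx | ⟨i, hxB⟩
      · exact Or.inl ⟨hx, hdS (Or.inl ⟨hxS, hx⟩)⟩
      · exact Or.inr ⟨i, hxB, hdS (Or.inr ⟨i, rfl, ⟨x, hxS, hxB⟩⟩)⟩

end Aux

/-- If every graph of 𝒞 with at least one vertex admits a CS-separator of
size at most p'·|V(G)|^c, then there is p > 0 such that every trigraph of the closure of
𝒞^{≤k} under generalized k-joins, with at least one vertex, admits a CS-separator of size
at most p·|V(T)|^(k²c). -/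
theorem stmt_15 {α : Type} [DecidableEq α] (C : Set (FTG α))
    (hgraph : ∀ G ∈ C, FTG.IsGraph G) (k : ℕ) (hk : 1 ≤ k) (c : ℝ) (hc : 1 ≤ c)
    (h : ∃ p' : ℝ, 0 < p' ∧ ∀ G ∈ C, G.verts.Nonempty →
      ∃ F, FTG.IsCSSeparator G F ∧ (F.card : ℝ) ≤ p' * (G.verts.card : ℝ) ^ c) :
    ∃ p : ℝ, 0 < p ∧ ∀ T : FTG α, FTG.InClosure C k T → T.verts.Nonempty →
      ∃ F, FTG.IsCSSeparator T F ∧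
        (F.card : ℝ) ≤ p * (T.verts.card : ℝ) ^ ((k : ℝ) ^ 2 * c) := by
  classical
  obtain ⟨p', hp'0, hp'⟩ := h
  set e : ℝ := (k : ℝ) ^ 2 * c with hedef
  have hk1 : (1:ℝ) ≤ (k:ℝ) := by exact_mod_cast hk
  have he1 : 1 ≤ e := by nlinarith
  have hce : c * (k:ℝ) ≤ e := by nlinarith
  set q : ℝ := max (2 * 4 ^ k) (p' ^ k * ((2 * k + 1 : ℕ) : ℝ) ^ (c * (k:ℝ))) with hqdef
  have hq1 : 2 * 4 ^ k ≤ q := le_max_left _ _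
  have hq2 : p' ^ k * ((2 * k + 1 : ℕ) : ℝ) ^ (c * (k:ℝ)) ≤ q := le_max_right _ _
  have hq0 : (0:ℝ) < q := lt_of_lt_of_le (by positivity) hq1
  have main : ∀ T : FTG α, FTG.InClosure C k T →
      ∃ F, T.IsCSSeparator F ∧ (F.card : ℝ) ≤ Hfun k e q T.verts.card := by
    intro T hT
    induction hT with
    | base T hbase =>
      by_cases hn : T.verts.card ≤ 2 * k
      · obtain ⟨F, hF, hcard⟩ := T.trivial_sep
        refine ⟨F, hF, ?_⟩
        rw [Hfun, if_pos hn]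
        exact_mod_cast hcard
      · obtain ⟨⟨P, hPU, hPd, hPc, hPsw, hPcr⟩, G, hGC, hreal⟩ := hbase
        have hGV := hreal.1
        have hGne : G.verts.Nonempty := by
          rw [hGV]
          exact Finset.card_pos.mp (by omega)
        obtain ⟨FG, hFG, hFGcard⟩ := hp' G hGC hGne
        rw [hGV] at hFGcard
        obtain ⟨F', hF', hcard⟩ := FTG.base_lift k hk T G P hPU hPd hPc hPcr hreal FG hFG
        refine ⟨F', hF', ?_⟩
        have hn0 : (0:ℝ) ≤ (T.verts.card : ℝ) := by positivity
        have h1 : (F'.card : ℝ) ≤ (FG.card : ℝ) ^ k := by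
          have h0 : ((F'.card : ℕ) : ℝ) ≤ ((FG.card ^ k : ℕ) : ℝ) := Nat.cast_le.mpr hcard
          push_cast at h0
          exact h0
        have h2 : (FG.card : ℝ) ^ k ≤ (p' * (T.verts.card : ℝ) ^ c) ^ k :=
          pow_le_pow_left₀ (by positivity) hFGcard k
        have h3 : (p' * (T.verts.card : ℝ) ^ c) ^ k
            = p' ^ k * (T.verts.card : ℝ) ^ (c * (k:ℝ)) := by
          rw [mul_pow, ← Real.rpow_natCast ((T.verts.card : ℝ) ^ c) k,
            ← Real.rpow_mul hn0]
        have h5 := num_base k hk c e p' q hc hce he1 hp'0 hq2 T.verts.card (by omega)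
        calc (F'.card : ℝ) ≤ (FG.card : ℝ) ^ k := h1
          _ ≤ (p' * (T.verts.card : ℝ) ^ c) ^ k := h2
          _ = p' ^ k * (T.verts.card : ℝ) ^ (c * (k:ℝ)) := h3
          _ ≤ Hfun k e q T.verts.card := h5
    | join T T1 T2 hcl1 hcl2 hJ ih1 ih2 =>
      obtain ⟨r, s, A, B, a, b, hr1, hrk, hs1, hsk, hAne, hBne, hAd, hBd, hainj, hbinj,
        hbA, haB, hdisj12, hV1, hV2, hbb0, haa0, hdich, hV, hag1, hag2, hcross⟩ := hJ
      obtain ⟨F1, hF1, hcard1⟩ := ih1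
      obtain ⟨F2, hF2, hcard2⟩ := ih2
      -- basic set facts
      have hUAsub : Finset.univ.biUnion A ⊆ T1.verts := by
        rw [hV1]
        exact Finset.subset_union_left
      have hUBsub : Finset.univ.biUnion B ⊆ T2.verts := by
        rw [hV2]
        exact Finset.subset_union_left
      have hdisjAB : Disjoint (Finset.univ.biUnion A) (Finset.univ.biUnion B) :=
        hdisj12.mono hUAsub hUBsub
      -- cardinalities
      have haA : (Finset.univ.biUnion A).card = ∑ j, (A j).card :=
        Finset.card_biUnion (fun j _ j' _ hne => hAd j j' hne)
      have hbB : (Finset.univ.biUnion B).card = ∑ i, (B i).card :=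
        Finset.card_biUnion (fun i _ i' _ hne => hBd i i' hne)
      have har : r ≤ (Finset.univ.biUnion A).card := by
        rw [haA]
        calc r = ∑ _j : Fin r, 1 := by simp
          _ ≤ ∑ j, (A j).card := Finset.sum_le_sum
              (fun j _ => Nat.one_le_iff_ne_zero.mpr (Finset.card_ne_zero_of_mem
                ((hAne j).choose_spec)))
      have hbs : s ≤ (Finset.univ.biUnion B).card := by
        rw [hbB]
        calc s = ∑ _i : Fin s, 1 := by simp
          _ ≤ ∑ i, (B i).card := Finset.sum_le_sum
              (fun i _ => Nat.one_le_iff_ne_zero.mpr (Finset.card_ne_zero_of_mem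
                ((hBne i).choose_spec)))
      have hn : T.verts.card = (Finset.univ.biUnion A).card + (Finset.univ.biUnion B).card := by
        rw [hV]
        exact Finset.card_union_of_disjoint hdisjAB
      have hdisjAb : Disjoint (Finset.univ.biUnion A) (Finset.univ.image b) := by
        rw [Finset.disjoint_right]
        intro x hx hx2
        obtain ⟨i, _, rfl⟩ := Finset.mem_image.mp hx
        obtain ⟨j, _, hj⟩ := Finset.mem_biUnion.mp hx2
        exact hbA i j hj
      have hdisjBa : Disjoint (Finset.univ.biUnion B) (Finset.univ.image a) := by
        rw [Finset.disjoint_right]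
        intro x hx hx2
        obtain ⟨j, _, rfl⟩ := Finset.mem_image.mp hx
        obtain ⟨i, _, hi⟩ := Finset.mem_biUnion.mp hx2
        exact haB j i hi
      have hn1 : T1.verts.card = (Finset.univ.biUnion A).card + s := by
        rw [hV1, Finset.card_union_of_disjoint hdisjAb,
          Finset.card_image_of_injective _ hbinj, Finset.card_univ, Fintype.card_fin]
      have hn2 : T2.verts.card = (Finset.univ.biUnion B).card + r := by
        rw [hV2, Finset.card_union_of_disjoint hdisjBa,
          Finset.card_image_of_injective _ hainj, Finset.card_univ, Fintype.card_fin]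
      -- side 1 lift
      have hdich1 : ∀ i j, (∀ x ∈ A j, T1.theta (b i) x = 1) ∨
          (∀ x ∈ A j, T1.theta (b i) x = -1) :=
        fun i j => (hdich i j).imp And.left And.left
      obtain ⟨G1, hG1cut, hG1card, hG1sep⟩ := FTG.side_lift T T1 A B b hBd hbinj hbA hV1
        hV hdisjAB hbb0 hag1 hcross hdich1 F1 hF1
      -- side 2 lift
      have hV' : T.verts = Finset.univ.biUnion B ∪ Finset.univ.biUnion A := by
        rw [hV, Finset.union_comm]
      have hcross2 : ∀ (i : Fin s) (j : Fin r), ∀ u ∈ B i, ∀ v ∈ A j,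
          ((∀ x ∈ B i, T2.theta (a j) x = 1) → T.theta u v = 1) ∧
          ((∀ x ∈ B i, T2.theta (a j) x = -1) → T.theta u v = -1) := by
        intro i j u hu v hv
        constructor
        · intro hall
          rcases hdich i j with ⟨hA1, _⟩ | ⟨_, hB1⟩
          · have := (hcross j i v hv u hu).1 hA1
            rw [T.symm u v]
            exact this
          · have h1 := hB1 u hu
            have h2 := hall u hu
            omega
        · intro hall
          rcases hdich i j with ⟨_, hB1⟩ | ⟨hA1, _⟩
          · have h1 := hB1 u hu
            have h2 := hall u hu
            omega
          · have := (hcross j i v hv u hu).2 hA1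
            rw [T.symm u v]
            exact this
      have hdich2 : ∀ (j : Fin r) (i : Fin s), (∀ x ∈ B i, T2.theta (a j) x = 1) ∨
          (∀ x ∈ B i, T2.theta (a j) x = -1) :=
        fun j i => (hdich i j).imp And.right And.right
      obtain ⟨G2, hG2cut, hG2card, hG2sep⟩ := FTG.side_lift T T2 B A a hAd hainj haB hV2
        hV' hdisjAB.symm haa0 hag2 hcross2 hdich2 F2 hF2
      -- case analysis on degenerate sides
      by_cases hsb : (Finset.univ.biUnion B).card = s
      · -- every B i is a singleton : use side 1 alone
        have hsing : ∀ i, (B i).card = 1 := by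
          by_contra hcon
          push_neg at hcon
          obtain ⟨i0, hi0⟩ := hcon
          have hlt : (∑ _i : Fin s, 1) < ∑ i, (B i).card := by
            refine Finset.sum_lt_sum (fun i _ => Nat.one_le_iff_ne_zero.mpr
              (Finset.card_ne_zero_of_mem ((hBne i).choose_spec))) ⟨i0, Finset.mem_univ i0, ?_⟩
            have := Nat.one_le_iff_ne_zero.mpr (Finset.card_ne_zero_of_mem
              ((hBne i0).choose_spec))
            omega
          simp only [Finset.sum_const, Finset.card_univ, Fintype.card_fin, smul_eq_mul,
            mul_one] at hlt
          omega
        have hno : ∀ K S : Set α, Disjoint K S →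
            ∀ i, ¬ ((K ∩ ↑(B i)).Nonempty ∧ (S ∩ ↑(B i)).Nonempty) := by
          rintro K S hd i ⟨⟨x, hxK, hxB⟩, ⟨y, hyS, hyB⟩⟩
          obtain ⟨z, hz⟩ := Finset.card_eq_one.mp (hsing i)
          rw [hz] at hxB hyB
          simp only [Finset.coe_singleton, Set.mem_singleton_iff] at hxB hyB
          subst hxB
          subst hyB
          exact (Set.disjoint_left.mp hd hxK) hyS
        refine ⟨G1, ⟨hG1cut, fun K S hK hS hd => hG1sep K S hK hS hd (hno K S hd)⟩, ?_⟩
        have heq : T1.verts.card = T.verts.card := by omega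
        calc (G1.card : ℝ) ≤ (F1.card : ℝ) := by exact_mod_cast hG1card
          _ ≤ Hfun k e q T1.verts.card := hcard1
          _ = Hfun k e q T.verts.card := by rw [heq]
      · by_cases hra : (Finset.univ.biUnion A).card = r
        · -- every A j is a singleton : use side 2 alone
          have hsing : ∀ j, (A j).card = 1 := by
            by_contra hcon
            push_neg at hcon
            obtain ⟨j0, hj0⟩ := hcon
            have hlt : (∑ _j : Fin r, 1) < ∑ j, (A j).card := by
              refine Finset.sum_lt_sum (fun j _ => Nat.one_le_iff_ne_zero.mpr
                (Finset.card_ne_zero_of_mem ((hAne j).choose_spec)))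
                ⟨j0, Finset.mem_univ j0, ?_⟩
              have := Nat.one_le_iff_ne_zero.mpr (Finset.card_ne_zero_of_mem
                ((hAne j0).choose_spec))
              omega
            simp only [Finset.sum_const, Finset.card_univ, Fintype.card_fin, smul_eq_mul,
              mul_one] at hlt
            omega
          have hno : ∀ K S : Set α, Disjoint K S →
              ∀ j, ¬ ((K ∩ ↑(A j)).Nonempty ∧ (S ∩ ↑(A j)).Nonempty) := by
            rintro K S hd j ⟨⟨x, hxK, hxA⟩, ⟨y, hyS, hyA⟩⟩
            obtain ⟨z, hz⟩ := Finset.card_eq_one.mp (hsing j)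
            rw [hz] at hxA hyA
            simp only [Finset.coe_singleton, Set.mem_singleton_iff] at hxA hyA
            subst hxA
            subst hyA
            exact (Set.disjoint_left.mp hd hxK) hyS
          refine ⟨G2, ⟨hG2cut, fun K S hK hS hd => hG2sep K S hK hS hd (hno K S hd)⟩, ?_⟩
          have heq : T2.verts.card = T.verts.card := by omega
          calc (G2.card : ℝ) ≤ (F2.card : ℝ) := by exact_mod_cast hG2card
            _ ≤ Hfun k e q T2.verts.card := hcard2
            _ = Hfun k e q T.verts.card := by rw [heq]
        · -- the genuinely additive case
          refine ⟨G1 ∪ G2, ⟨?_, ?_⟩, ?_⟩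
          · intro c' hc'
            rcases Finset.mem_union.mp hc' with hmem | hmem
            · exact hG1cut c' hmem
            · exact hG2cut c' hmem
          · intro K S hK hS hd
            by_cases hno1 : ∀ i, ¬ ((K ∩ ↑(B i)).Nonempty ∧ (S ∩ ↑(B i)).Nonempty)
            · obtain ⟨c', hc', hsep⟩ := hG1sep K S hK hS hd hno1
              exact ⟨c', Finset.mem_union_left _ hc', hsep⟩
            · by_cases hno2 : ∀ j, ¬ ((K ∩ ↑(A j)).Nonempty ∧ (S ∩ ↑(A j)).Nonempty)
              · obtain ⟨c', hc', hsep⟩ := hG2sep K S hK hS hd hno2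
                exact ⟨c', Finset.mem_union_right _ hc', hsep⟩
              · exfalso
                push_neg at hno1 hno2
                obtain ⟨i, ⟨x, hxK, hxB⟩, ⟨y, hyS, hyB⟩⟩ := hno1
                obtain ⟨j, ⟨u, huK, huA⟩, ⟨v, hvS, hvA⟩⟩ := hno2
                have hxB' : x ∈ B i := Finset.mem_coe.mp hxB
                have hyB' : y ∈ B i := Finset.mem_coe.mp hyB
                have huA' : u ∈ A j := Finset.mem_coe.mp huA
                have hvA' : v ∈ A j := Finset.mem_coe.mp hvA
                have hne_ux : u ≠ x := by
                  intro heq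
                  exact (Finset.disjoint_left.mp hdisjAB
                    (Finset.mem_biUnion.mpr ⟨j, Finset.mem_univ j, huA'⟩))
                    (Finset.mem_biUnion.mpr ⟨i, Finset.mem_univ i, heq ▸ hxB'⟩)
                have hne_vy : v ≠ y := by
                  intro heq
                  exact (Finset.disjoint_left.mp hdisjAB
                    (Finset.mem_biUnion.mpr ⟨j, Finset.mem_univ j, hvA'⟩))
                    (Finset.mem_biUnion.mpr ⟨i, Finset.mem_univ i, heq ▸ hyB'⟩)
                obtain ⟨_, _, _, hadj⟩ := hK.2 huK hxK hne_ux
                obtain ⟨_, _, _, hanti⟩ := hS.2 hvS hyS hne_vy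
                rcases hdich1 i j with hA1 | hA1
                · have := (hcross j i v hvA' y hyB').1 hA1
                  omega
                · have := (hcross j i u huA' x hxB').2 hA1
                  omega
          · -- size bound
            have hlt1 : T1.verts.card + 1 ≤ T.verts.card := by omega
            have hlt2 : T2.verts.card + 1 ≤ T.verts.card := by omega
            have h12 : T1.verts.card + T2.verts.card ≤ T.verts.card + 2 * k := by omega
            have hnum := num_join k hk e q he1 hq1 T.verts.card T1.verts.card T2.verts.card
              hlt1 hlt2 h12
            have hcu : ((G1 ∪ G2).card : ℝ) ≤ (G1.card : ℝ) + (G2.card : ℝ) := by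
              exact_mod_cast Finset.card_union_le G1 G2
            have hg1 : (G1.card : ℝ) ≤ (F1.card : ℝ) := by exact_mod_cast hG1card
            have hg2 : (G2.card : ℝ) ≤ (F2.card : ℝ) := by exact_mod_cast hG2card
            calc ((G1 ∪ G2).card : ℝ) ≤ (G1.card : ℝ) + (G2.card : ℝ) := hcu
              _ ≤ Hfun k e q T1.verts.card + Hfun k e q T2.verts.card := by
                  have := le_trans hg1 hcard1
                  have := le_trans hg2 hcard2
                  linarith [le_trans hg1 hcard1, le_trans hg2 hcard2]
              _ ≤ Hfun k e q T.verts.card := hnum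
  -- final assembly
  refine ⟨q + 4 ^ k, by positivity, ?_⟩
  intro T hT hTne
  obtain ⟨F, hF, hc'⟩ := main T hT
  refine ⟨F, hF, le_trans hc' ?_⟩
  have hn1 : 1 ≤ T.verts.card := Finset.card_pos.mpr hTne
  have hn1R : (1:ℝ) ≤ (T.verts.card : ℝ) := by exact_mod_cast hn1
  have hne1 : (1:ℝ) ≤ (T.verts.card : ℝ) ^ e := by
    calc (1:ℝ) = 1 ^ e := (Real.one_rpow e).symm
      _ ≤ (T.verts.card : ℝ) ^ e := Real.rpow_le_rpow (by norm_num) hn1R (by linarith)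
  have hne0 : (0:ℝ) ≤ (T.verts.card : ℝ) ^ e := by linarith
  by_cases hn : T.verts.card ≤ 2 * k
  · rw [Hfun, if_pos hn]
    have h2p : (2:ℝ) ^ T.verts.card ≤ 4 ^ k := by
      calc (2:ℝ) ^ T.verts.card ≤ 2 ^ (2 * k) := pow_le_pow_right₀ (by norm_num) hn
        _ = 4 ^ k := by rw [pow_mul]; norm_num
    have h4k : (0:ℝ) < 4 ^ k := by positivity
    calc (2:ℝ) ^ T.verts.card ≤ 4 ^ k := h2p
      _ = (4 ^ k) * 1 := (mul_one _).symm
      _ ≤ (q + 4 ^ k) * (T.verts.card : ℝ) ^ e := by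
          refine mul_le_mul (by linarith) hne1 (by norm_num) (by linarith)
  · rw [Hfun, if_neg hn]
    have hmono : ((T.verts.card - 2 * k : ℕ) : ℝ) ^ e ≤ (T.verts.card : ℝ) ^ e := by
      refine Real.rpow_le_rpow (by positivity) ?_ (by linarith)
      exact_mod_cast Nat.sub_le _ _
    have h4k : (0:ℝ) ≤ (4:ℝ) ^ k := by positivity
    calc q * ((T.verts.card - 2 * k : ℕ) : ℝ) ^ e ≤ q * (T.verts.card : ℝ) ^ e :=
          mul_le_mul_of_nonneg_left hmono (le_of_lt hq0)
      _ ≤ (q + 4 ^ k) * (T.verts.card : ℝ) ^ e := by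
          refine mul_le_mul_of_nonneg_right (by linarith) hne0
end

section
/- Let A and B be disjoint finite sets, E a finite set, and endA : E → A, endB : E → B. Let m = |E| and suppose that for every vertex v ∈ A ∪ B, the number of e ∈ E with endA(e) = v or endB(e) = v is strictly less than m/3. Then there exist subsets E1, E2 ⊆ E with |E1| ≥ m/48 and |E2| ≥ m/48 such that for every e1 ∈ E1 and e2 ∈ E2, endA(e1) ≠ endA(e2) and endB(e1) ≠ endB(e2). -/
/-- Greedy prefix selection: if each weight is `< c` and the total is at least `t ≥ 0`,
then some subset has weight sum in `[t, t + c)`. -/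
lemma exists_subset_sum_between {ι : Type*} (f : ι → ℕ) (c t : ℝ)
    (ht : 0 ≤ t) (hc0 : 0 < c) :
    ∀ s : Finset ι, (∀ i ∈ s, (f i : ℝ) < c) → t ≤ ∑ i ∈ s, (f i : ℝ) →
    ∃ u, u ⊆ s ∧ t ≤ ∑ i ∈ u, (f i : ℝ) ∧ ∑ i ∈ u, (f i : ℝ) < t + c := by
  classical
  intro s
  induction s using Finset.strongInduction with
  | _ s ih =>
    intro hc htot
    rcases s.eq_empty_or_nonempty with rfl | ⟨i, hi⟩
    · refine ⟨∅, Finset.Subset.refl _, by simpa using htot, ?_⟩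
      simp only [Finset.sum_empty]
      linarith
    · by_cases h : t ≤ ∑ j ∈ s.erase i, (f j : ℝ)
      · obtain ⟨u, hu, h1, h2⟩ := ih (s.erase i) (Finset.erase_ssubset hi)
          (fun j hj => hc j (Finset.mem_of_mem_erase hj)) h
        exact ⟨u, hu.trans (Finset.erase_subset _ _), h1, h2⟩
      · refine ⟨s, Finset.Subset.refl _, htot, ?_⟩
        push_neg at h
        have hfi := hc i hi
        have hsum : ∑ j ∈ s, (f j : ℝ) = (f i : ℝ) + ∑ j ∈ s.erase i, (f j : ℝ) :=
          (Finset.add_sum_erase _ _ hi).symm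
        linarith

/-- In a bipartite multigraph (edge set E with endpoint maps into disjoint
sides A and B) with m edges and maximum degree strictly less than m/3, there exist
edge sets E1, E2 of size at least m/48 such that no edge of E1 shares an extremity with
an edge of E2. -/
theorem stmt_16 {α β : Type} [DecidableEq α] (A B : Finset α) (hAB : Disjoint A B)
    (E : Finset β) (endA endB : β → α)
    (hA : ∀ e ∈ E, endA e ∈ A) (hB : ∀ e ∈ E, endB e ∈ B)
    (hdeg : ∀ v ∈ A ∪ B,
      ((E.filter fun e => endA e = v ∨ endB e = v).card : ℝ) < (E.card : ℝ) / 3) :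
    ∃ E1 E2 : Finset β, E1 ⊆ E ∧ E2 ⊆ E ∧
      (E.card : ℝ) / 48 ≤ (E1.card : ℝ) ∧ (E.card : ℝ) / 48 ≤ (E2.card : ℝ) ∧
      ∀ e1 ∈ E1, ∀ e2 ∈ E2, endA e1 ≠ endA e2 ∧ endB e1 ≠ endB e2 := by
  classical
  by_cases hm0 : E.card = 0
  · exact ⟨∅, ∅, by simp, by simp, by simp [hm0], by simp [hm0], by simp⟩
  set m : ℝ := (E.card : ℝ) with hm
  have hmpos : (0 : ℝ) < m := by
    rw [hm]
    exact_mod_cast Nat.pos_of_ne_zero hm0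
  -- Step 1 : split on the A side.
  have htotA : E.card = ∑ a ∈ A, (E.filter fun e => endA e = a).card :=
    Finset.card_eq_sum_card_fiberwise hA
  have hcA : ∀ a ∈ A, ((E.filter fun e => endA e = a).card : ℝ) < m / 3 := by
    intro a ha
    refine lt_of_le_of_lt ?_ (hdeg a (Finset.mem_union_left _ ha))
    exact_mod_cast Finset.card_le_card
      (Finset.monotone_filter_right E (fun e _ he => Or.inl he))
  obtain ⟨A1, hA1sub, hA1l, hA1u⟩ :=
    exists_subset_sum_between (fun a => (E.filter fun e => endA e = a).card) (m / 3) (m / 3)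
      (by linarith) (by linarith) A hcA
      (by
        rw [← Nat.cast_sum, ← htotA]
        linarith)
  set F1 : Finset β := E.filter (fun e => endA e ∈ A1) with hF1
  set F2 : Finset β := E.filter (fun e => endA e ∉ A1) with hF2
  have hF1card : (F1.card : ℝ) = ∑ a ∈ A1, ((E.filter fun e => endA e = a).card : ℝ) := by
    have h1 : F1.card = ∑ a ∈ A1, (F1.filter fun e => endA e = a).card :=
      Finset.card_eq_sum_card_fiberwise (fun e he => (Finset.mem_filter.mp he).2)
    have h2 : ∀ a ∈ A1, (F1.filter fun e => endA e = a) = E.filter fun e => endA e = a := by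
      intro a ha
      rw [hF1, Finset.filter_filter]
      apply Finset.filter_congr
      intro e _
      constructor
      · rintro ⟨_, h⟩; exact h
      · rintro h; exact ⟨h ▸ ha, h⟩
    rw [h1]
    push_cast
    exact Finset.sum_congr rfl (fun a ha => by rw [h2 a ha])
  have hsplit : F1.card + F2.card = E.card := Finset.card_filter_add_card_filter_not _
  have hF1l : m / 3 ≤ (F1.card : ℝ) := by rw [hF1card]; exact hA1l
  have hF1u : (F1.card : ℝ) < m / 3 + m / 3 := by rw [hF1card]; exact hA1u
  have hF2l : m / 3 ≤ (F2.card : ℝ) := by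
    have : (F1.card : ℝ) + (F2.card : ℝ) = m := by rw [hm]; exact_mod_cast hsplit
    linarith
  have hF1E : F1 ⊆ E := Finset.filter_subset _ _
  have hF2E : F2 ⊆ E := Finset.filter_subset _ _
  -- fiber weights on the B side
  set f : α → ℕ := fun b => (F1.filter fun e => endB e = b).card with hf
  set g : α → ℕ := fun b => (F2.filter fun e => endB e = b).card with hg
  have hfg : ∀ b ∈ B, (f b : ℝ) + (g b : ℝ) < m / 3 := by
    intro b hb
    have hsplitb : f b + g b = (E.filter fun e => endB e = b).card := by
      show ((E.filter (fun e => endA e ∈ A1)).filter fun e => endB e = b).card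
          + ((E.filter (fun e => endA e ∉ A1)).filter fun e => endB e = b).card
          = (E.filter fun e => endB e = b).card
      have := Finset.card_filter_add_card_filter_not
        (s := E.filter fun e => endB e = b) (p := fun e => endA e ∈ A1)
      convert this using 3 <;> · ext e; simp only [Finset.mem_filter]; tauto
    have hle : ((E.filter fun e => endB e = b).card : ℝ)
        ≤ ((E.filter fun e => endA e = b ∨ endB e = b).card : ℝ) := by
      exact_mod_cast Finset.card_le_card
        (Finset.monotone_filter_right E (fun e _ he => Or.inr he))
    have := hdeg b (Finset.mem_union_right _ hb)
    have : (f b : ℝ) + (g b : ℝ) = ((E.filter fun e => endB e = b).card : ℝ) := by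
      exact_mod_cast hsplitb
    linarith [hdeg b (Finset.mem_union_right _ hb)]
  have hsumf : (F1.card : ℝ) = ∑ b ∈ B, (f b : ℝ) := by
    have : F1.card = ∑ b ∈ B, f b :=
      Finset.card_eq_sum_card_fiberwise (fun e he => hB e (hF1E he))
    exact_mod_cast this
  have hsumg : (F2.card : ℝ) = ∑ b ∈ B, (g b : ℝ) := by
    have : F2.card = ∑ b ∈ B, g b :=
      Finset.card_eq_sum_card_fiberwise (fun e he => hB e (hF2E he))
    exact_mod_cast this
  -- The generic construction from a disjoint pair of vertex sets on side B.
  have main : ∀ B1 B2 : Finset α, B1 ⊆ B → B2 ⊆ B → Disjoint B1 B2 →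
      m / 48 ≤ ∑ b ∈ B1, (f b : ℝ) → m / 48 ≤ ∑ b ∈ B2, (g b : ℝ) →
      ∃ E1 E2 : Finset β, E1 ⊆ E ∧ E2 ⊆ E ∧
        (E.card : ℝ) / 48 ≤ (E1.card : ℝ) ∧ (E.card : ℝ) / 48 ≤ (E2.card : ℝ) ∧
        ∀ e1 ∈ E1, ∀ e2 ∈ E2, endA e1 ≠ endA e2 ∧ endB e1 ≠ endB e2 := by
    intro B1 B2 _ _ hdisj h1 h2
    refine ⟨F1.filter (fun e => endB e ∈ B1), F2.filter (fun e => endB e ∈ B2),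
      (Finset.filter_subset _ _).trans hF1E, (Finset.filter_subset _ _).trans hF2E, ?_, ?_, ?_⟩
    · have hc1 : (F1.filter (fun e => endB e ∈ B1)).card = ∑ b ∈ B1, f b := by
        have h1' : (F1.filter (fun e => endB e ∈ B1)).card
            = ∑ b ∈ B1, ((F1.filter (fun e => endB e ∈ B1)).filter fun e => endB e = b).card :=
          Finset.card_eq_sum_card_fiberwise (fun e he => (Finset.mem_filter.mp he).2)
        rw [h1']
        refine Finset.sum_congr rfl (fun b hb => ?_)
        rw [hf]
        congr 1
        rw [Finset.filter_filter]
        apply Finset.filter_congr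
        intro e _
        constructor
        · rintro ⟨_, h⟩; exact h
        · rintro h; exact ⟨h ▸ hb, h⟩
      rw [show ((F1.filter (fun e => endB e ∈ B1)).card : ℝ) = ∑ b ∈ B1, (f b : ℝ) by
        rw [hc1]; push_cast; ring]
      exact h1
    · have hc2 : (F2.filter (fun e => endB e ∈ B2)).card = ∑ b ∈ B2, g b := by
        have h2' : (F2.filter (fun e => endB e ∈ B2)).card
            = ∑ b ∈ B2, ((F2.filter (fun e => endB e ∈ B2)).filter fun e => endB e = b).card :=
          Finset.card_eq_sum_card_fiberwise (fun e he => (Finset.mem_filter.mp he).2)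
        rw [h2']
        refine Finset.sum_congr rfl (fun b hb => ?_)
        rw [hg]
        congr 1
        rw [Finset.filter_filter]
        apply Finset.filter_congr
        intro e _
        constructor
        · rintro ⟨_, h⟩; exact h
        · rintro h; exact ⟨h ▸ hb, h⟩
      rw [show ((F2.filter (fun e => endB e ∈ B2)).card : ℝ) = ∑ b ∈ B2, (g b : ℝ) by
        rw [hc2]; push_cast; ring]
      exact h2
    · intro e1 he1 e2 he2
      obtain ⟨he1F, he1B⟩ := Finset.mem_filter.mp he1
      obtain ⟨he2F, he2B⟩ := Finset.mem_filter.mp he2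
      have he1A : endA e1 ∈ A1 := (Finset.mem_filter.mp he1F).2
      have he2A : endA e2 ∉ A1 := (Finset.mem_filter.mp he2F).2
      constructor
      · intro h; exact he2A (h ▸ he1A)
      · intro h
        exact (Finset.disjoint_left.mp hdisj he1B) (h ▸ he2B)
  -- Now find the disjoint pair B1, B2.
  set Bf : Finset α := B.filter (fun b => g b ≤ f b) with hBf
  set Bg : Finset α := B.filter (fun b => ¬ g b ≤ f b) with hBg
  have hBfB : Bf ⊆ B := Finset.filter_subset _ _
  have hBgB : Bg ⊆ B := Finset.filter_subset _ _
  have hsplitf : ∑ b ∈ Bf, (f b : ℝ) + ∑ b ∈ Bg, (f b : ℝ) = ∑ b ∈ B, (f b : ℝ) :=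
    Finset.sum_filter_add_sum_filter_not _ _ _
  have hsplitg : ∑ b ∈ Bf, (g b : ℝ) + ∑ b ∈ Bg, (g b : ℝ) = ∑ b ∈ B, (g b : ℝ) :=
    Finset.sum_filter_add_sum_filter_not _ _ _
  by_cases h1 : m / 48 ≤ ∑ b ∈ Bf, (f b : ℝ)
  · by_cases h2 : m / 48 ≤ ∑ b ∈ Bg, (g b : ℝ)
    · exact main Bf Bg hBfB hBgB (Finset.disjoint_filter_filter_not B B _) h1 h2
    · -- all the g-mass sits on Bf; split Bf.
      push_neg at h2
      have hgBf : m / 3 - m / 48 ≤ ∑ b ∈ Bf, (g b : ℝ) := by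
        have : m / 3 ≤ ∑ b ∈ B, (g b : ℝ) := hsumg ▸ hF2l
        linarith
      have hgc : ∀ b ∈ Bf, (g b : ℝ) < m / 6 := by
        intro b hb
        obtain ⟨hbB, hble⟩ := Finset.mem_filter.mp hb
        have := hfg b hbB
        have : (g b : ℝ) ≤ (f b : ℝ) := by exact_mod_cast hble
        linarith [hfg b hbB]
      obtain ⟨B2, hB2sub, hB2l, hB2u⟩ :=
        exists_subset_sum_between g (m / 6) (m / 48) (by linarith) (by linarith) Bf hgc
          (by linarith)
      have hB1g : m / 48 ≤ ∑ b ∈ Bf \ B2, (g b : ℝ) := by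
        have hs : ∑ b ∈ Bf \ B2, (g b : ℝ) + ∑ b ∈ B2, (g b : ℝ) = ∑ b ∈ Bf, (g b : ℝ) :=
          Finset.sum_sdiff hB2sub
        linarith
      have hB1f : m / 48 ≤ ∑ b ∈ Bf \ B2, (f b : ℝ) := by
        refine le_trans hB1g (Finset.sum_le_sum ?_)
        intro b hb
        have hble := (Finset.mem_filter.mp (Finset.mem_sdiff.mp hb).1).2
        exact_mod_cast hble
      exact main (Bf \ B2) B2 ((Finset.sdiff_subset).trans hBfB) (hB2sub.trans hBfB)
        Finset.sdiff_disjoint hB1f hB2l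
  · -- all the f-mass sits on Bg; split Bg.
    push_neg at h1
    have hfBg : m / 3 - m / 48 ≤ ∑ b ∈ Bg, (f b : ℝ) := by
      have : m / 3 ≤ ∑ b ∈ B, (f b : ℝ) := hsumf ▸ hF1l
      linarith
    have hfc : ∀ b ∈ Bg, (f b : ℝ) < m / 6 := by
      intro b hb
      obtain ⟨hbB, hblt⟩ := Finset.mem_filter.mp hb
      have hlt : (f b : ℝ) < (g b : ℝ) := by exact_mod_cast Nat.lt_of_not_le hblt
      linarith [hfg b hbB]
    obtain ⟨B1, hB1sub, hB1l, hB1u⟩ :=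
      exists_subset_sum_between f (m / 6) (m / 48) (by linarith) (by linarith) Bg hfc
        (by linarith)
    have hB2f : m / 48 ≤ ∑ b ∈ Bg \ B1, (f b : ℝ) := by
      have hs : ∑ b ∈ Bg \ B1, (f b : ℝ) + ∑ b ∈ B1, (f b : ℝ) = ∑ b ∈ Bg, (f b : ℝ) :=
        Finset.sum_sdiff hB1sub
      linarith
    have hB2g : m / 48 ≤ ∑ b ∈ Bg \ B1, (g b : ℝ) := by
      refine le_trans hB2f (Finset.sum_le_sum ?_)
      intro b hb
      have hblt := (Finset.mem_filter.mp (Finset.mem_sdiff.mp hb).1).2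
      have : f b < g b := Nat.lt_of_not_le hblt
      exact_mod_cast this.le
    exact main B1 (Bg \ B1) (hB1sub.trans hBgB) ((Finset.sdiff_subset).trans hBgB)
      Finset.disjoint_sdiff hB1l hB2g
end
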